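/- arXiv:1704.00964 — 3 statements merged into one kernel-verified Lean document; each statement's English description precedes it below -/
import Mathlib

section
/- For integers n, d, x, s for which G₂(n,d,x,s) is defined, W(G₂(n,d,x,s)) = W(B₂(n−2,d,x)) + (2d+4)n − 2d² − 7d − 6 − 2x + 2s² − s. -/
/-- The Wiener index: sum of distances over unordered pairs of vertices. -/
noncomputable def wiener {V : Type*} [Fintype V] (G : SimpleGraph V) : ℕ :=
  (∑ u : V, ∑ v : V, G.dist u v) / 2

/-- Vertex set for a caterpillar with spine `u_{-d}, …, u_d` and `L i` leaves at `u_i`.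
`(0, i)` is the spine vertex `u_i`; `(j, i)` for `1 ≤ j ≤ L i` is the `j`-th leaf at `u_i`. -/
noncomputable def catVerts (d : ℤ) (L : ℤ → ℕ) : Finset (ℤ × ℤ) :=
  (Finset.Icc (-d) d).biUnion (fun i => (Finset.Icc (0:ℤ) (L i : ℤ)).image (fun j => (j, i)))

/-- The caterpillar graph with spine `u_{-d}, …, u_d` and `L i` leaves appended to `u_i`. -/
def caterpillar (d : ℤ) (L : ℤ → ℕ) : SimpleGraph ↥(catVerts d L) :=
  SimpleGraph.fromRel (fun a b =>
    (a.1.1 = 0 ∧ b.1.1 = 0 ∧ a.1.2 + 1 = b.1.2) ∨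
    (a.1.2 = b.1.2 ∧ a.1.1 = 0 ∧ b.1.1 ≠ 0))

/-- Leaf-count function of the caterpillar `B₁(n,d,x)`. -/
def B1L (n d x : ℤ) : ℤ → ℕ := fun i =>
  (if i = -d - 1 + x ∨ i = d + 1 - x then 1 else 0) +
  (if |i| ≤ (n - 2*d - 4)/2 then 1 else 0)

/-- The caterpillar `B₁(n,d,x)`. -/
noncomputable def B1 (n d x : ℤ) := caterpillar d (B1L n d x)

/-- Leaf-count function of the caterpillar `B₂(n,d,x)`. -/
def B2L (n d x : ℤ) : ℤ → ℕ := fun i =>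
  (if |i| ≤ d - 2 then 1 else 0) +
  (if |i| = d - 1 then x.toNat else 0) +
  (if |i| = d then ((n - 4*d - 2*x + 2)/2).toNat else 0)

/-- The caterpillar `B₂(n,d,x)`. -/
noncomputable def B2 (n d x : ℤ) := caterpillar d (B2L n d x)

/-- `G₁(n,d,x,s)`: `B₁(n−2,d,x)` with an extra leaf at `u_s` and at `u_d`. -/
noncomputable def G1 (n d x s : ℤ) :=
  caterpillar d (fun i => B1L (n-2) d x i + (if i = s then 1 else 0) + (if i = d then 1 else 0))

/-- `G₂(n,d,x,s)`: `B₂(n−2,d,x)` with an extra leaf at `u_s` and at `u_d`. -/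
noncomputable def G2 (n d x s : ℤ) :=
  caterpillar d (fun i => B2L (n-2) d x i + (if i = s then 1 else 0) + (if i = d then 1 else 0))

/-- `G₃(n,d,x,s)`: `B₁(n−1,d,x)` with an extra leaf at `u_s`. -/
noncomputable def G3 (n d x s : ℤ) :=
  caterpillar d (fun i => B1L (n-1) d x i + (if i = s then 1 else 0))

/-- `G₄(n,d,x,s)`: `B₂(n−1,d,x)` with an extra leaf at `u_s`. -/
noncomputable def G4 (n d x s : ℤ) :=
  caterpillar d (fun i => B2L (n-1) d x i + (if i = s then 1 else 0))

/-- The star on `n` vertices: vertex `0` adjacent to all others. -/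
def starGraph (n : ℕ) : SimpleGraph (Fin n) :=
  SimpleGraph.fromRel (fun a _ => a.val = 0)


open SimpleGraph Finset

section general
variable {V : Type*} (G : SimpleGraph V)

lemma walk_lb (φ : V → ℤ) (h : ∀ a b, G.Adj a b → |φ a - φ b| ≤ 1)
    {a b : V} (p : G.Walk a b) : |φ a - φ b| ≤ (p.length : ℤ) := by
  induction p with
  | nil => simp
  | @cons u v w h' p ih =>
      have := h u v h'
      have : |φ u - φ w| ≤ |φ u - φ v| + |φ v - φ w| := abs_sub_le _ _ _
      simp only [SimpleGraph.Walk.length_cons]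
      push_cast
      omega

lemma dist_lb (φ : V → ℤ) (h : ∀ a b, G.Adj a b → |φ a - φ b| ≤ 1)
    {a b : V} (hr : G.Reachable a b) : |φ a - φ b| ≤ (G.dist a b : ℤ) := by
  obtain ⟨p, hp⟩ := hr.exists_walk_length_eq_dist
  simpa [hp] using walk_lb G φ h p

lemma dist_tri {a b c : V} (h1 : G.Reachable a b) (h2 : G.Reachable b c) :
    G.dist a c ≤ G.dist a b + G.dist b c := by
  obtain ⟨p, hp⟩ := h1.exists_walk_length_eq_dist
  obtain ⟨q, hq⟩ := h2.exists_walk_length_eq_dist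
  have := G.dist_le (p.append q)
  simpa [SimpleGraph.Walk.length_append, hp, hq] using this

/-- leaf-peeling -/
lemma dist_leaf {a w b : V} (ha : ∀ c, G.Adj a c ↔ c = w)
    (hr : G.Reachable w b) (hab : a ≠ b) : G.dist a b = G.dist w b + 1 := by
  have haw : G.Adj a w := (ha w).mpr rfl
  have h1 : G.dist a w = 1 := SimpleGraph.dist_eq_one_iff_adj.mpr haw
  have hrab : G.Reachable a b := (haw.reachable).trans hr
  have hle : G.dist a b ≤ G.dist w b + 1 := by
    have := dist_tri G haw.reachable hr
    omega
  have hge : G.dist w b + 1 ≤ G.dist a b := by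
    have hne : G.dist a b ≠ 0 := by
      rw [SimpleGraph.dist_ne_zero_iff_ne_and_reachable]
      exact ⟨hab, hrab⟩
    obtain ⟨p, hp⟩ := hrab.exists_walk_length_eq_dist
    cases p with
    | nil => exact (hab rfl).elim
    | @cons _ v _ h' q =>
        have hv : v = w := (ha v).mp h'
        subst hv
        have := G.dist_le q
        simp [SimpleGraph.Walk.length_cons] at hp
        omega
  omega

end general




variable {d : ℤ} {L : ℤ → ℕ}

lemma mem_catVerts {p : ℤ × ℤ} :
    p ∈ catVerts d L ↔ (-d ≤ p.2 ∧ p.2 ≤ d ∧ 0 ≤ p.1 ∧ p.1 ≤ (L p.2 : ℤ)) := by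
  obtain ⟨j, i⟩ := p
  simp only [catVerts, Finset.mem_biUnion, Finset.mem_image, Finset.mem_Icc, Prod.mk.injEq]
  constructor
  · rintro ⟨i', ⟨h1, h2⟩, j', ⟨h3, h4⟩, rfl, rfl⟩; exact ⟨h1, h2, h3, h4⟩
  · rintro ⟨h1, h2, h3, h4⟩; exact ⟨i, ⟨h1, h2⟩, j, ⟨h3, h4⟩, rfl, rfl⟩

/-- spine vertex -/
def sp (d : ℤ) (L : ℤ → ℕ) (i : ℤ) (h : -d ≤ i ∧ i ≤ d) : ↥(catVerts d L) :=
  ⟨(0, i), mem_catVerts.mpr ⟨h.1, h.2, le_refl _, by positivity⟩⟩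

lemma adj_step {a b : ↥(catVerts d L)} (h0 : a.val.1 = 0) (h0' : b.val.1 = 0)
    (h : a.val.2 + 1 = b.val.2) : (caterpillar d L).Adj a b := by
  rw [caterpillar, SimpleGraph.fromRel_adj]
  refine ⟨?_, Or.inl (Or.inl ⟨h0, h0', h⟩)⟩
  intro he
  rw [he] at h
  omega

lemma spine_reach_le : ∀ k : ℕ, ∀ (a b : ↥(catVerts d L)), a.val.1 = 0 → b.val.1 = 0 →
    b.val.2 = a.val.2 + k →
    (caterpillar d L).Reachable a b ∧ (caterpillar d L).dist a b ≤ k := by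
  intro k
  induction k with
  | zero =>
      intro a b h0 h0' h
      have : a = b := by
        apply Subtype.ext
        apply Prod.ext <;> omega
      subst this
      exact ⟨Reachable.refl _, by simp [SimpleGraph.dist_self]⟩
  | succ k ih =>
      intro a b h0 h0' h
      have hma := a.property
      have hmb := b.property
      rw [mem_catVerts] at hma hmb
      have hmem : ((0 : ℤ), a.val.2 + 1) ∈ catVerts d L := by
        rw [mem_catVerts]
        refine ⟨by omega, by omega, le_refl _, by positivity⟩
      set c : ↥(catVerts d L) := ⟨((0 : ℤ), a.val.2 + 1), hmem⟩ with hc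
      have hadj : (caterpillar d L).Adj a c := adj_step h0 rfl rfl
      obtain ⟨hr, hd'⟩ := ih c b rfl h0' (by simp [hc]; omega)
      refine ⟨hadj.reachable.trans hr, ?_⟩
      have h1 : (caterpillar d L).dist a c = 1 := SimpleGraph.dist_eq_one_iff_adj.mpr hadj
      have := dist_tri (caterpillar d L) hadj.reachable hr
      omega

lemma spine_dist_le (a b : ↥(catVerts d L)) (h0 : a.val.1 = 0) (h0' : b.val.1 = 0) :
    (caterpillar d L).Reachable a b ∧
    (caterpillar d L).dist a b ≤ (a.val.2 - b.val.2).natAbs := by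
  rcases le_total a.val.2 b.val.2 with h | h
  · have := spine_reach_le ((b.val.2 - a.val.2).toNat) a b h0 h0' (by omega)
    exact ⟨this.1, by omega⟩
  · have := spine_reach_le ((a.val.2 - b.val.2).toNat) b a h0' h0 (by omega)
    refine ⟨this.1.symm, ?_⟩
    rw [SimpleGraph.dist_comm]
    omega

lemma cat_adj_coord {a b : ↥(catVerts d L)} (h : (caterpillar d L).Adj a b) :
    |a.val.2 - b.val.2| ≤ 1 := by
  rw [caterpillar, SimpleGraph.fromRel_adj] at h
  rw [abs_le]
  obtain ⟨-, h | h⟩ := h <;> rcases h with ⟨-, -, h⟩ | ⟨h, -, -⟩ <;> omega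

lemma spine_dist (a b : ↥(catVerts d L)) (h0 : a.val.1 = 0) (h0' : b.val.1 = 0) :
    (caterpillar d L).dist a b = (a.val.2 - b.val.2).natAbs := by
  obtain ⟨hr, hle⟩ := spine_dist_le a b h0 h0'
  have h1 := dist_lb (caterpillar d L) (fun v => v.val.2) (fun a b h => cat_adj_coord h) hr
  have h2 : |a.val.2 - b.val.2| = ((a.val.2 - b.val.2).natAbs : ℤ) := Int.abs_eq_natAbs _
  simp only [h2] at h1
  omega

/-- the unique neighbour of a leaf -/
lemma leaf_nbr {a : ↥(catVerts d L)} (ha : a.val.1 ≠ 0) (c : ↥(catVerts d L)) :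
    (caterpillar d L).Adj a c ↔ c.val = (0, a.val.2) := by
  rw [caterpillar, SimpleGraph.fromRel_adj]
  constructor
  · rintro ⟨hne, (⟨h1, -, -⟩ | ⟨-, h1, -⟩) | (⟨-, h1, -⟩ | ⟨h1, h2, -⟩)⟩
    · exact absurd h1 ha
    · exact absurd h1 ha
    · exact absurd h1 ha
    · exact Prod.ext h2 h1
  · intro h
    refine ⟨?_, Or.inr (Or.inr ⟨by rw [h], by rw [h], ha⟩)⟩
    intro he
    subst he
    rw [h] at ha
    exact ha rfl

lemma cat_reach (a b : ↥(catVerts d L)) : (caterpillar d L).Reachable a b := by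
  have hma := a.property
  have hmb := b.property
  rw [mem_catVerts] at hma hmb
  have hmemA : ((0 : ℤ), a.val.2) ∈ catVerts d L := by
    rw [mem_catVerts]; exact ⟨hma.1, hma.2.1, le_refl _, by positivity⟩
  have hmemB : ((0 : ℤ), b.val.2) ∈ catVerts d L := by
    rw [mem_catVerts]; exact ⟨hmb.1, hmb.2.1, le_refl _, by positivity⟩
  set a' : ↥(catVerts d L) := ⟨((0 : ℤ), a.val.2), hmemA⟩
  set b' : ↥(catVerts d L) := ⟨((0 : ℤ), b.val.2), hmemB⟩
  have h1 : (caterpillar d L).Reachable a a' := by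
    by_cases h : a.val.1 = 0
    · have : a = a' := Subtype.ext (Prod.ext h rfl)
      rw [this]
    · exact (((leaf_nbr h) a').mpr rfl).reachable
  have h2 : (caterpillar d L).Reachable a' b' := (spine_dist_le a' b' rfl rfl).1
  have h3 : (caterpillar d L).Reachable b b' := by
    by_cases h : b.val.1 = 0
    · have : b = b' := Subtype.ext (Prod.ext h rfl)
      rw [this]
    · exact (((leaf_nbr h) b').mpr rfl).reachable
  exact (h1.trans h2).trans h3.symm

/-- distance from a spine vertex to any other vertex -/
lemma dist_sp_any (a b : ↥(catVerts d L)) (h0 : a.val.1 = 0) (hab : a ≠ b) :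
    (caterpillar d L).dist a b
      = (a.val.2 - b.val.2).natAbs + (if b.val.1 = 0 then 0 else 1) := by
  by_cases hb : b.val.1 = 0
  · rw [spine_dist a b h0 hb]; simp [hb]
  · have hmemB : ((0 : ℤ), b.val.2) ∈ catVerts d L := by
      have hmb := b.property
      rw [mem_catVerts] at hmb ⊢
      exact ⟨hmb.1, hmb.2.1, le_refl _, by positivity⟩
    set b' : ↥(catVerts d L) := ⟨((0 : ℤ), b.val.2), hmemB⟩
    have hba : b ≠ a := hab.symm
    have hpeel : (caterpillar d L).dist b a = (caterpillar d L).dist b' a + 1 := by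
      refine dist_leaf _ (fun c => ?_) (cat_reach b' a) hba
      rw [leaf_nbr hb c]
      exact ⟨fun h => Subtype.ext h, fun h => by rw [h]⟩
    rw [SimpleGraph.dist_comm, hpeel, SimpleGraph.dist_comm, spine_dist a b' h0 rfl]
    simp only [hb, if_false, b']

/-- THE distance formula -/
lemma cat_dist (a b : ↥(catVerts d L)) (hab : a ≠ b) :
    (caterpillar d L).dist a b
      = (a.val.2 - b.val.2).natAbs + (if a.val.1 = 0 then 0 else 1)
          + (if b.val.1 = 0 then 0 else 1) := by
  by_cases ha : a.val.1 = 0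
  · rw [dist_sp_any a b ha hab]; simp [ha]
  · have hmemA : ((0 : ℤ), a.val.2) ∈ catVerts d L := by
      have hma := a.property
      rw [mem_catVerts] at hma ⊢
      exact ⟨hma.1, hma.2.1, le_refl _, by positivity⟩
    set a' : ↥(catVerts d L) := ⟨((0 : ℤ), a.val.2), hmemA⟩
    have hpeel : (caterpillar d L).dist a b = (caterpillar d L).dist a' b + 1 := by
      refine dist_leaf _ (fun c => ?_) (cat_reach a' b) hab
      rw [leaf_nbr ha c]
      exact ⟨fun h => Subtype.ext h, fun h => by rw [h]⟩
    by_cases hb : b = a'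
    · rw [hpeel, hb, SimpleGraph.dist_self]
      simp [ha, a', hb]
    · rw [hpeel, dist_sp_any a' b rfl (fun h => hb h.symm)]
      simp only [ha, if_false, if_true, a']
      omega


def Dfun (p q : ℤ × ℤ) : ℕ :=
  if p = q then 0
  else (p.2 - q.2).natAbs + (if p.1 = 0 then 0 else 1) + (if q.1 = 0 then 0 else 1)

lemma Dfun_symm (p q : ℤ × ℤ) : Dfun p q = Dfun q p := by
  unfold Dfun
  by_cases h : p = q
  · simp [h]
  · rw [if_neg h, if_neg (Ne.symm h)]
    omega

lemma cat_dist' (a b : ↥(catVerts d L)) :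
    (caterpillar d L).dist a b = Dfun a.val b.val := by
  by_cases h : a = b
  · subst h
    simp [SimpleGraph.dist_self, Dfun]
  · rw [cat_dist a b h, Dfun, if_neg (fun hv => h (Subtype.ext hv))]

lemma wiener_cat :
    wiener (caterpillar d L)
      = (∑ p ∈ catVerts d L, ∑ q ∈ catVerts d L, Dfun p q) / 2 := by
  unfold wiener
  congr 1
  rw [← Finset.sum_coe_sort (catVerts d L) (fun p => ∑ q ∈ catVerts d L, Dfun p q)]
  refine Finset.sum_congr rfl (fun u _ => ?_)
  rw [← Finset.sum_coe_sort (catVerts d L) (fun q => Dfun u.val q)]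
  exact Finset.sum_congr rfl (fun v _ => cat_dist' u v)

lemma sum2_insert {α : Type*} [DecidableEq α] (t : Finset α) (a : α) (ha : a ∉ t)
    (f : α → α → ℕ) (hsym : ∀ p q, f p q = f q p) (hdiag : f a a = 0) :
    ∑ p ∈ insert a t, ∑ q ∈ insert a t, f p q
      = ∑ p ∈ t, ∑ q ∈ t, f p q + 2 * ∑ q ∈ t, f a q := by
  rw [Finset.sum_insert ha, Finset.sum_insert ha]
  have h1 : ∑ p ∈ t, ∑ q ∈ insert a t, f p q
      = ∑ p ∈ t, (f p a + ∑ q ∈ t, f p q) :=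
    Finset.sum_congr rfl (fun p _ => Finset.sum_insert ha)
  rw [h1, Finset.sum_add_distrib]
  have h2 : ∑ p ∈ t, f p a = ∑ p ∈ t, f a p :=
    Finset.sum_congr rfl (fun p _ => hsym p a)
  rw [h2, hdiag]
  omega

lemma catVerts_insert2 (LB : ℤ → ℕ) (s : ℤ) (hs : -d ≤ s ∧ s ≤ d) (hsd : s ≠ d)
    (hd0 : 0 ≤ d) :
    catVerts d (fun i => LB i + (if i = s then 1 else 0) + (if i = d then 1 else 0))
      = insert ((LB s : ℤ) + 1, s) (insert ((LB d : ℤ) + 1, d) (catVerts d LB)) := by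
  ext p
  obtain ⟨j, i⟩ := p
  simp only [Finset.mem_insert, mem_catVerts, Prod.mk.injEq]
  by_cases h1 : i = s
  · subst h1
    simp only [if_pos rfl, if_neg hsd]
    push_cast
    simp only [and_true, true_and, eq_self_iff_true]
    omega
  · by_cases h2 : i = d
    · subst h2
      simp only [if_neg h1, if_pos rfl]
      push_cast
      simp only [and_true, true_and, eq_self_iff_true]
      omega
    · simp only [if_neg h1, if_neg h2]
      push_cast
      omega

lemma not_mem_top (LB : ℤ → ℕ) (t : ℤ) : ((LB t : ℤ) + 1, t) ∉ catVerts d LB := by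
  rw [mem_catVerts]
  push_cast
  omega

/-- sum over Icc of a constant, in ℚ -/
lemma sum_Icc_const (a b : ℤ) (h : a ≤ b + 1) (c : ℚ) :
    ∑ _i ∈ Finset.Icc a b, c = ((b : ℚ) - a + 1) * c := by
  rw [Finset.sum_const, Int.card_Icc]
  have : ((b + 1 - a).toNat : ℚ) = (b : ℚ) - a + 1 := by
    have h2 : ((b + 1 - a).toNat : ℤ) = b + 1 - a := Int.toNat_of_nonneg (by omega)
    have h3 : (((b + 1 - a).toNat : ℤ) : ℚ) = ((b : ℚ) + 1 - a) := by rw [h2]; push_cast; ring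
    push_cast at h3 ⊢
    linarith
  rw [nsmul_eq_mul, this]

lemma Icc_succ_right (a b : ℤ) (h : a ≤ b + 1) :
    Finset.Icc a (b + 1) = insert (b + 1) (Finset.Icc a b) := by
  ext i
  simp only [Finset.mem_Icc, Finset.mem_insert]
  omega

lemma sum_Icc_id (a : ℤ) : ∀ b : ℤ, a - 1 ≤ b →
    ∑ i ∈ Finset.Icc a b, (i : ℚ) = ((b : ℚ) - a + 1) * (a + b) / 2 := by
  refine Int.le_induction ?_ ?_
  · have : Finset.Icc a (a - 1) = ∅ := by
      ext i; simp only [Finset.mem_Icc, Finset.notMem_empty, iff_false]; omega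
    rw [this]
    push_cast
    ring_nf
  · intro b hb ih
    have hab : a ≤ b + 1 := by omega
    rw [Icc_succ_right a b hab, Finset.sum_insert (by simp [Finset.mem_Icc])]
    rw [ih]
    push_cast
    ring

/-- sum of |t - i| over Icc a b when a ≤ t ≤ b -/
lemma sum_Icc_abs (a b t : ℤ) (h1 : a ≤ t) (h2 : t ≤ b) :
    ∑ i ∈ Finset.Icc a b, |(t : ℚ) - i|
      = (((t : ℚ) - a) * ((t : ℚ) - a + 1) + ((b : ℚ) - t) * ((b : ℚ) - t + 1)) / 2 := by
  have hsplit : Finset.Icc a b = Finset.Icc a t ∪ Finset.Icc (t + 1) b := by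
    ext i; simp only [Finset.mem_Icc, Finset.mem_union]; omega
  have hdisj : Disjoint (Finset.Icc a t) (Finset.Icc (t + 1) b) := by
    rw [Finset.disjoint_left]
    intro i hi1 hi2
    simp only [Finset.mem_Icc] at hi1 hi2
    omega
  rw [hsplit, Finset.sum_union hdisj]
  have e1 : ∑ i ∈ Finset.Icc a t, |(t : ℚ) - i| = ∑ i ∈ Finset.Icc a t, ((t : ℚ) - i) := by
    refine Finset.sum_congr rfl (fun i hi => ?_)
    rw [Finset.mem_Icc] at hi
    have : (i : ℚ) ≤ t := by exact_mod_cast hi.2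
    rw [abs_of_nonneg (by linarith)]
  have e2 : ∑ i ∈ Finset.Icc (t+1) b, |(t : ℚ) - i|
      = ∑ i ∈ Finset.Icc (t+1) b, ((i : ℚ) - t) := by
    refine Finset.sum_congr rfl (fun i hi => ?_)
    rw [Finset.mem_Icc] at hi
    have : (t : ℚ) + 1 ≤ i := by exact_mod_cast hi.1
    rw [abs_of_nonpos (by linarith), neg_sub]
  rw [e1, e2, Finset.sum_sub_distrib, Finset.sum_sub_distrib,
    Finset.sum_const, Finset.sum_const, sum_Icc_id a t (by omega), sum_Icc_id (t+1) b (by omega),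
    Int.card_Icc, Int.card_Icc]
  have c1 : ((t + 1 - a).toNat : ℚ) = (t : ℚ) + 1 - a := by
    have := Int.toNat_of_nonneg (show 0 ≤ t + 1 - a by omega)
    exact_mod_cast congrArg (Int.cast : ℤ → ℚ) this
  have c2 : ((b + 1 - (t + 1)).toNat : ℚ) = (b : ℚ) - t := by
    have := Int.toNat_of_nonneg (show 0 ≤ b + 1 - (t + 1) by omega)
    have h3 := congrArg (Int.cast : ℤ → ℚ) this
    push_cast at h3 ⊢
    linarith
  rw [nsmul_eq_mul, nsmul_eq_mul, c1, c2]
  push_cast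
  ring

/-- sum of |t - i| over Icc a b when b ≤ t (all terms t - i) -/
lemma sum_Icc_abs_right (a b t : ℤ) (h1 : a ≤ b + 1) (h2 : b ≤ t) :
    ∑ i ∈ Finset.Icc a b, |(t : ℚ) - i|
      = ((b : ℚ) - a + 1) * t - ((b : ℚ) - a + 1) * (a + b) / 2 := by
  have e1 : ∑ i ∈ Finset.Icc a b, |(t : ℚ) - i| = ∑ i ∈ Finset.Icc a b, ((t : ℚ) - i) := by
    refine Finset.sum_congr rfl (fun i hi => ?_)
    rw [Finset.mem_Icc] at hi
    have : (i : ℚ) ≤ t := by exact_mod_cast le_trans hi.2 h2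
    rw [abs_of_nonneg (by linarith)]
  rw [e1, Finset.sum_sub_distrib, sum_Icc_id a b (by omega),
    Finset.sum_const, Int.card_Icc, nsmul_eq_mul]
  have c1 : ((b + 1 - a).toNat : ℚ) = (b : ℚ) + 1 - a := by
    have := Int.toNat_of_nonneg (show 0 ≤ b + 1 - a by omega)
    have h3 := congrArg (Int.cast : ℤ → ℚ) this
    push_cast at h3 ⊢
    linarith
  rw [c1]
  ring

lemma cast_natAbs_q (m : ℤ) : ((m.natAbs : ℚ)) = |(m : ℚ)| := by
  rw [Nat.cast_natAbs, Int.cast_abs]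

lemma sum_ind_ne_zero (m : ℕ) :
    ∑ j ∈ Finset.Icc (0 : ℤ) (m : ℤ), (if j = 0 then (0:ℚ) else 1) = (m : ℚ) := by
  have h : ∀ j ∈ Finset.Icc (0 : ℤ) (m : ℤ), (if j = 0 then (0:ℚ) else 1)
      = 1 - (if j = 0 then (1:ℚ) else 0) := by
    intro j _
    by_cases h : j = 0 <;> simp [h]
  rw [Finset.sum_congr rfl h, Finset.sum_sub_distrib]
  rw [Finset.sum_ite_eq' (Finset.Icc (0 : ℤ) (m : ℤ)) 0 (fun _ => (1:ℚ))]
  rw [sum_Icc_const 0 m (by positivity) 1]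
  simp

lemma sum_Dfun (LB : ℤ → ℕ) (c t : ℤ) (hc : (LB t : ℤ) < c) :
    (∑ q ∈ catVerts d LB, ((Dfun (c, t) q : ℕ) : ℚ))
      = ∑ i ∈ Finset.Icc (-d) d,
          (((LB i : ℚ) + 1) * (|(t:ℚ) - (i:ℚ)| + 1) + (LB i : ℚ)) := by
  have hc0 : c ≠ 0 := by omega
  rw [catVerts, Finset.sum_biUnion]
  · refine Finset.sum_congr rfl (fun i hi => ?_)
    rw [Finset.sum_image (by intro a _ b _ h; simpa using h)]
    have hval : ∀ j ∈ Finset.Icc (0:ℤ) ((LB i : ℕ) : ℤ),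
        ((Dfun (c, t) (j, i) : ℕ) : ℚ)
          = |(t:ℚ) - (i:ℚ)| + 1 + (if j = 0 then (0:ℚ) else 1) := by
      intro j hj
      rw [Finset.mem_Icc] at hj
      have hne : (c, t) ≠ (j, i) := by
        intro h
        rw [Prod.mk.injEq] at h
        obtain ⟨h1, h2⟩ := h
        subst h2
        omega
      rw [Dfun, if_neg hne]
      simp only [if_neg hc0]
      by_cases h : j = 0
      · subst h
        simp only [if_pos rfl]
        push_cast [cast_natAbs_q]
        ring
      · simp only [if_neg h]
        push_cast [cast_natAbs_q]
        ring
    rw [Finset.sum_congr rfl hval, Finset.sum_add_distrib, sum_ind_ne_zero,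
      sum_Icc_const 0 (LB i) (by positivity) (|(t:ℚ) - (i:ℚ)| + 1)]
    push_cast
    ring
  · intro i hi i' hi' hne
    simp only [Function.onFun, Finset.disjoint_left]
    intro p hp hp'
    simp only [Finset.mem_image, Finset.mem_Icc] at hp hp'
    obtain ⟨j, -, rfl⟩ := hp
    obtain ⟨j', -, h⟩ := hp'
    rw [Prod.mk.injEq] at h
    exact hne h.2.symm


lemma B2L_cast (N dd x R : ℤ) (hx1 : 1 ≤ x) (hR2 : 2 * R = N - 4*dd - 2*x + 2)
    (hR0 : 0 ≤ R) (i : ℤ) :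
    ((B2L N dd x i : ℕ) : ℚ)
      = (if |i| ≤ dd - 2 then (1:ℚ) else 0) + (if |i| = dd - 1 then (x:ℚ) else 0)
        + (if |i| = dd then (R:ℚ) else 0) := by
  have hdiv : (N - 4*dd - 2*x + 2)/2 = R := by
    rw [← hR2, Int.mul_ediv_cancel_left _ two_ne_zero]
  have hxc : ((x.toNat : ℕ) : ℚ) = (x : ℚ) := by
    have := Int.toNat_of_nonneg (by omega : (0:ℤ) ≤ x)
    exact_mod_cast congrArg (Int.cast : ℤ → ℚ) this
  have hRc : (((N - 4*dd - 2*x + 2)/2).toNat : ℚ) = (R : ℚ) := by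
    rw [hdiv]
    have := Int.toNat_of_nonneg hR0
    exact_mod_cast congrArg (Int.cast : ℤ → ℚ) this
  unfold B2L
  push_cast
  rw [hxc, hRc]

lemma sum_B2L (N dd x R : ℤ) (hd1 : 4 ≤ dd) (hx1 : 1 ≤ x)
    (hR2 : 2 * R = N - 4*dd - 2*x + 2) (hR0 : 0 ≤ R) (g : ℤ → ℚ) :
    ∑ i ∈ Finset.Icc (-dd) dd, ((B2L N dd x i : ℕ) : ℚ) * g i
      = (∑ i ∈ Finset.Icc (-(dd-2)) (dd-2), g i)
        + (x:ℚ) * (g (dd-1) + g (-(dd-1))) + (R:ℚ) * (g dd + g (-dd)) := by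
  have key : ∀ i ∈ Finset.Icc (-dd) dd, ((B2L N dd x i : ℕ) : ℚ) * g i
      = (if |i| ≤ dd - 2 then g i else 0)
        + ((if i = dd - 1 then (x:ℚ) * g i else 0) + (if i = -(dd-1) then (x:ℚ) * g i else 0))
        + ((if i = dd then (R:ℚ) * g i else 0) + (if i = -dd then (R:ℚ) * g i else 0)) := by
    intro i _
    rw [B2L_cast N dd x R hx1 hR2 hR0 i]
    simp only [abs_eq (show (0:ℤ) ≤ dd - 1 by omega), abs_eq (show (0:ℤ) ≤ dd by omega),
      abs_le]
    split_ifs <;> first | ring1 | (exfalso; omega)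
  rw [Finset.sum_congr rfl key]
  rw [Finset.sum_add_distrib, Finset.sum_add_distrib, Finset.sum_add_distrib,
    Finset.sum_add_distrib]
  have t1 : ∑ i ∈ Finset.Icc (-dd) dd, (if |i| ≤ dd - 2 then g i else 0)
      = ∑ i ∈ Finset.Icc (-(dd-2)) (dd-2), g i := by
    rw [← Finset.sum_filter]
    congr 1
    ext i
    simp only [Finset.mem_filter, Finset.mem_Icc, abs_le]
    omega
  have t2 : ∑ i ∈ Finset.Icc (-dd) dd, (if i = dd - 1 then (x:ℚ) * g i else 0)
      = (x:ℚ) * g (dd-1) := by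
    rw [Finset.sum_ite_eq' (Finset.Icc (-dd) dd) (dd-1) (fun i => (x:ℚ) * g i)]
    rw [if_pos (by rw [Finset.mem_Icc]; omega)]
  have t3 : ∑ i ∈ Finset.Icc (-dd) dd, (if i = -(dd-1) then (x:ℚ) * g i else 0)
      = (x:ℚ) * g (-(dd-1)) := by
    rw [Finset.sum_ite_eq' (Finset.Icc (-dd) dd) (-(dd-1)) (fun i => (x:ℚ) * g i)]
    rw [if_pos (by rw [Finset.mem_Icc]; omega)]
  have t4 : ∑ i ∈ Finset.Icc (-dd) dd, (if i = dd then (R:ℚ) * g i else 0)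
      = (R:ℚ) * g dd := by
    rw [Finset.sum_ite_eq' (Finset.Icc (-dd) dd) dd (fun i => (R:ℚ) * g i)]
    rw [if_pos (by rw [Finset.mem_Icc]; omega)]
  have t5 : ∑ i ∈ Finset.Icc (-dd) dd, (if i = -dd then (R:ℚ) * g i else 0)
      = (R:ℚ) * g (-dd) := by
    rw [Finset.sum_ite_eq' (Finset.Icc (-dd) dd) (-dd) (fun i => (R:ℚ) * g i)]
    rw [if_pos (by rw [Finset.mem_Icc]; omega)]
  rw [t1, t2, t3, t4, t5]
  ring

lemma abs_cast_sub_of_le (a b : ℤ) (h : a ≤ b) : |(a:ℚ) - (b:ℚ)| = (b:ℚ) - (a:ℚ) := by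
  have h2 : (a:ℚ) ≤ (b:ℚ) := by exact_mod_cast h
  rw [abs_of_nonpos (by linarith)]
  ring

lemma abs_cast_sub_of_ge (a b : ℤ) (h : b ≤ a) : |(a:ℚ) - (b:ℚ)| = (a:ℚ) - (b:ℚ) := by
  have h2 : (b:ℚ) ≤ (a:ℚ) := by exact_mod_cast h
  exact abs_of_nonneg (by linarith)




/-- `W(G₂(n,d,x,s)) = W(B₂(n−2,d,x)) + (2d+4)n − 2d² − 7d − 6 − 2x + 2s² − s`. -/
theorem wiener_G2 (n d x s : ℤ) (hne : Even n) (hn : 20 ≤ n)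
    (hd1 : 4 ≤ d) (hd2 : 4 * d ≤ n - 2)
    (hx1 : 1 ≤ x) (hx2 : 2 * x ≤ (n - 2) - 4 * d + 2)
    (hs : s ∈ ({-1, 0, 1, 2} : Set ℤ)) :
    (wiener (G2 n d x s) : ℚ)
      = (wiener (B2 (n - 2) d x) : ℚ) + (2 * (d:ℚ) + 4) * (n : ℚ)
        - 2 * (d:ℚ)^2 - 7 * (d:ℚ) - 6 - 2 * (x:ℚ) + 2 * (s:ℚ)^2 - (s:ℚ) := by
  obtain ⟨m, hm⟩ := hne
  simp only [Set.mem_insert_iff, Set.mem_singleton_iff] at hs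
  have hs1 : -1 ≤ s := by omega
  have hs2 : s ≤ 2 := by omega
  set R : ℤ := m - 2*d - x with hRdef
  have hR2 : 2 * R = (n - 2) - 4*d - 2*x + 2 := by omega
  have hR0 : 0 ≤ R := by omega
  set LB : ℤ → ℕ := B2L (n-2) d x with hLB
  have hLBs : LB s = 1 := by
    rw [hLB]; unfold B2L
    rcases abs_choice s with h | h <;> simp only [h] <;> split_ifs <;> omega
  have hLBd : (LB d : ℤ) = R := by
    rw [hLB]; unfold B2L
    simp only [abs_of_nonneg (show (0:ℤ) ≤ d by omega)]
    split_ifs <;> push_cast <;> omega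
  set nv1 : ℤ × ℤ := ((LB s : ℤ) + 1, s) with hnv1
  set nv2 : ℤ × ℤ := ((LB d : ℤ) + 1, d) with hnv2
  set old : Finset (ℤ × ℤ) := catVerts d LB with hold
  -- vertex set decomposition
  have hset : catVerts d (fun i => LB i + (if i = s then 1 else 0) + (if i = d then 1 else 0))
      = insert nv1 (insert nv2 old) :=
    catVerts_insert2 LB s ⟨by omega, by omega⟩ (by omega) (by omega)
  have hnv2old : nv2 ∉ old := not_mem_top LB d
  have hnv1in : nv1 ∉ insert nv2 old := by
    rw [Finset.mem_insert]
    push_neg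
    refine ⟨?_, not_mem_top LB s⟩
    intro h
    rw [hnv1, hnv2, Prod.mk.injEq] at h
    omega
  -- double sum expansion
  have e2 : ∑ p ∈ insert nv2 old, ∑ q ∈ insert nv2 old, Dfun p q
      = ∑ p ∈ old, ∑ q ∈ old, Dfun p q + 2 * ∑ q ∈ old, Dfun nv2 q :=
    sum2_insert old nv2 hnv2old Dfun Dfun_symm (by simp [Dfun])
  have e1 : ∑ p ∈ insert nv1 (insert nv2 old), ∑ q ∈ insert nv1 (insert nv2 old), Dfun p q
      = ∑ p ∈ insert nv2 old, ∑ q ∈ insert nv2 old, Dfun p q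
        + 2 * ∑ q ∈ insert nv2 old, Dfun nv1 q :=
    sum2_insert (insert nv2 old) nv1 hnv1in Dfun Dfun_symm (by simp [Dfun])
  have e3 : ∑ q ∈ insert nv2 old, Dfun nv1 q = Dfun nv1 nv2 + ∑ q ∈ old, Dfun nv1 q :=
    Finset.sum_insert hnv2old
  set T : ℕ := Dfun nv1 nv2 + ∑ q ∈ old, Dfun nv1 q + ∑ q ∈ old, Dfun nv2 q with hT
  have etot : ∑ p ∈ insert nv1 (insert nv2 old), ∑ q ∈ insert nv1 (insert nv2 old), Dfun p q
      = ∑ p ∈ old, ∑ q ∈ old, Dfun p q + 2 * T := by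
    rw [e1, e2, e3, hT]; ring
  -- wiener relation
  have hwG : wiener (G2 n d x s) = wiener (B2 (n-2) d x) + T := by
    rw [show G2 n d x s = caterpillar d
        (fun i => LB i + (if i = s then 1 else 0) + (if i = d then 1 else 0)) from rfl]
    rw [show B2 (n-2) d x = caterpillar d LB from rfl]
    rw [wiener_cat, wiener_cat, hset, etot, ← hold]
    exact Nat.add_mul_div_left _ _ (show 0 < 2 by norm_num)
  rw [hwG]
  push_cast
  -- now compute (T : ℚ)
  have hcast1 : ((∑ q ∈ old, Dfun nv1 q : ℕ) : ℚ)
      = ∑ i ∈ Finset.Icc (-d) d,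
          (((LB i : ℚ) + 1) * (|(s:ℚ) - (i:ℚ)| + 1) + (LB i : ℚ)) := by
    rw [Nat.cast_sum]
    exact sum_Dfun LB ((LB s : ℤ) + 1) s (by omega)
  have hcast2 : ((∑ q ∈ old, Dfun nv2 q : ℕ) : ℚ)
      = ∑ i ∈ Finset.Icc (-d) d,
          (((LB i : ℚ) + 1) * (|(d:ℚ) - (i:ℚ)| + 1) + (LB i : ℚ)) := by
    rw [Nat.cast_sum]
    exact sum_Dfun LB ((LB d : ℤ) + 1) d (by omega)
  have hne12 : nv1 ≠ nv2 := by
    intro h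
    rw [hnv1, hnv2, Prod.mk.injEq] at h
    omega
  have hD12 : ((Dfun nv1 nv2 : ℕ) : ℚ) = (d:ℚ) - s + 2 := by
    rw [Dfun, if_neg hne12, if_neg (show ¬(nv1.1 = 0) by rw [hnv1]; dsimp; omega),
      if_neg (show ¬(nv2.1 = 0) by rw [hnv2]; dsimp; omega)]
    have hsub : nv1.2 = s := by rw [hnv1]
    have hsub2 : nv2.2 = d := by rw [hnv2]
    rw [hsub, hsub2]
    push_cast [cast_natAbs_q]
    rw [abs_of_nonpos (show (s:ℚ) - (d:ℚ) ≤ 0 by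
      have h : (s:ℚ) ≤ (d:ℚ) := by exact_mod_cast (show s ≤ d by omega)
      linarith)]
    ring
  have hTq : (T : ℚ) = ((d:ℚ) - s + 2)
      + (∑ i ∈ Finset.Icc (-d) d, (((LB i : ℚ) + 1) * (|(s:ℚ) - (i:ℚ)| + 1) + (LB i : ℚ)))
      + (∑ i ∈ Finset.Icc (-d) d, (((LB i : ℚ) + 1) * (|(d:ℚ) - (i:ℚ)| + 1) + (LB i : ℚ))) := by
    rw [hT]
    push_cast [hcast1, hcast2, hD12]
    ring
  have hexp : ∀ t : ℤ, ∀ i ∈ Finset.Icc (-d) d,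
      ((LB i : ℚ) + 1) * (|(t:ℚ) - (i:ℚ)| + 1) + (LB i : ℚ)
        = ((B2L (n-2) d x i : ℕ) : ℚ) * (|(t:ℚ) - (i:ℚ)| + 2) + |(t:ℚ) - (i:ℚ)| + 1 := by
    intro t i _
    rw [hLB]
    ring
  have hBs := sum_B2L (n-2) d x R hd1 hx1 hR2 hR0 (fun i => |(s:ℚ) - (i:ℚ)| + 2)
  have hBd := sum_B2L (n-2) d x R hd1 hx1 hR2 hR0 (fun i => |(d:ℚ) - (i:ℚ)| + 2)
  beta_reduce at hBs hBd
  have hJs := sum_Icc_abs (-(d-2)) (d-2) s (by omega) (by omega)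
  have hJd := sum_Icc_abs_right (-(d-2)) (d-2) d (by omega) (by omega)
  have hIs := sum_Icc_abs (-d) d s (by omega) (by omega)
  have hId := sum_Icc_abs (-d) d d (by omega) (by omega)
  have hC1 := sum_Icc_const (-(d-2)) (d-2) (by omega) (2:ℚ)
  have hC2 := sum_Icc_const (-d) d (by omega) (1:ℚ)
  have v1 := abs_cast_sub_of_le s (d-1) (by omega)
  have v2 := abs_cast_sub_of_ge s (-(d-1)) (by omega)
  have v3 := abs_cast_sub_of_le s d (by omega)
  have v4 := abs_cast_sub_of_ge s (-d) (by omega)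
  have w1 := abs_cast_sub_of_ge d (d-1) (by omega)
  have w2 := abs_cast_sub_of_ge d (-(d-1)) (by omega)
  have w3 := abs_cast_sub_of_ge d d (by omega)
  have w4 := abs_cast_sub_of_ge d (-d) (by omega)
  rw [hTq, Finset.sum_congr rfl (hexp s), Finset.sum_congr rfl (hexp d)]
  rw [Finset.sum_add_distrib, Finset.sum_add_distrib, Finset.sum_add_distrib,
    Finset.sum_add_distrib, hBs, hBd, v1, v2, v3, v4, w1, w2, w3, w4]
  have hsplitJ : ∀ t : ℤ, ∑ i ∈ Finset.Icc (-(d-2)) (d-2), (|(t:ℚ) - (i:ℚ)| + 2)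
      = (∑ i ∈ Finset.Icc (-(d-2)) (d-2), |(t:ℚ) - (i:ℚ)|)
        + ∑ _i ∈ Finset.Icc (-(d-2)) (d-2), (2:ℚ) := fun t => Finset.sum_add_distrib
  rw [hsplitJ s, hsplitJ d, hJs, hJd, hIs, hId, hC1, hC2, hRdef, hm]
  push_cast
  ring
end

section
/- For integers n, d, x, s for which G₃(n,d,x,s) is defined, W(G₃(n,d,x,s)) = W(B₁(n−1,d,x)) + n²/4 − dn + 2d² + 5d + 11/4 − 2x + 2s². In particular, W(G₃(n,d,x,1)) = W(G₃(n,d,x,0)) + 2. -/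
namespace CatAux

lemma mem_catVerts {d : ℤ} {L : ℤ → ℕ} {p : ℤ × ℤ} :
    p ∈ catVerts d L ↔ (-d ≤ p.2 ∧ p.2 ≤ d ∧ 0 ≤ p.1 ∧ p.1 ≤ (L p.2 : ℤ)) := by
  obtain ⟨j, i⟩ := p
  simp only [catVerts, Finset.mem_biUnion, Finset.mem_image, Finset.mem_Icc, Prod.mk.injEq]
  constructor
  · rintro ⟨a, ⟨h1, h2⟩, b, ⟨h3, h4⟩, rfl, rfl⟩
    exact ⟨h1, h2, h3, h4⟩
  · rintro ⟨h1, h2, h3, h4⟩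
    exact ⟨i, ⟨h1, h2⟩, j, ⟨h3, h4⟩, rfl, rfl⟩

variable {d : ℤ} {L : ℤ → ℕ}

/-- spine vertex -/
def sv (d : ℤ) (L : ℤ → ℕ) (i : ℤ) (h1 : -d ≤ i) (h2 : i ≤ d) : ↥(catVerts d L) :=
  ⟨(0, i), mem_catVerts.2 ⟨h1, h2, le_refl 0, Int.ofNat_nonneg _⟩⟩

lemma adj_spine {a b : ↥(catVerts d L)} (ha : a.1.1 = 0) (hb : b.1.1 = 0)
    (hab : a.1.2 + 1 = b.1.2) : (caterpillar d L).Adj a b := by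
  rw [caterpillar, SimpleGraph.fromRel_adj]
  refine ⟨?_, Or.inl (Or.inl ⟨ha, hb, hab⟩)⟩
  intro h; rw [h] at hab; omega

lemma adj_leaf {a b : ↥(catVerts d L)} (ha : a.1.1 = 0) (hb : b.1.1 ≠ 0)
    (hab : a.1.2 = b.1.2) : (caterpillar d L).Adj a b := by
  rw [caterpillar, SimpleGraph.fromRel_adj]
  refine ⟨?_, Or.inl (Or.inr ⟨hab, ha, hb⟩)⟩
  intro h; rw [h] at ha; exact hb ha

lemma adj_step {a b : ↥(catVerts d L)} (h : (caterpillar d L).Adj a b) :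
    |a.1.2 - b.1.2| ≤ 1 := by
  rw [caterpillar, SimpleGraph.fromRel_adj] at h
  rw [abs_le]
  rcases h.2 with (⟨_,_,h3⟩|⟨h3,_,_⟩)|(⟨_,_,h3⟩|⟨h3,_,_⟩) <;> omega

lemma leaf_nbr {a c : ↥(catVerts d L)} (ha : a.1.1 ≠ 0) (h : (caterpillar d L).Adj a c) :
    c.1 = (0, a.1.2) := by
  rw [caterpillar, SimpleGraph.fromRel_adj] at h
  rcases h.2 with (⟨h1,_,_⟩|⟨_,h1,_⟩)|(⟨_,h1,_⟩|⟨h1,h2,_⟩)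
  · exact absurd h1 ha
  · exact absurd h1 ha
  · exact absurd h1 ha
  · exact Prod.ext h2 h1

/-- walk along the spine -/
lemma spine_walk (m : ℕ) : ∀ (a b : ↥(catVerts d L)), a.1.1 = 0 → b.1.1 = 0 →
    a.1.2 + m = b.1.2 → ∃ p : (caterpillar d L).Walk a b, p.length = m := by
  induction m with
  | zero =>
    intro a b ha hb hab
    have : a = b := by
      apply Subtype.ext; apply Prod.ext
      · rw [ha, hb]
      · simpa using hab
    subst this
    exact ⟨SimpleGraph.Walk.nil, rfl⟩
  | succ m ih =>
    intro a b ha hb hab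
    have hma := mem_catVerts.1 a.2
    have hmb := mem_catVerts.1 b.2
    have h1 : -d ≤ a.1.2 + m := by push_cast at hab ⊢; omega
    have h2 : a.1.2 + m ≤ d := by push_cast at hab ⊢; omega
    set c : ↥(catVerts d L) := sv d L (a.1.2 + m) h1 h2 with hc
    obtain ⟨p, hp⟩ := ih a c ha rfl rfl
    have hadj : (caterpillar d L).Adj c b := by
      apply adj_spine rfl hb
      show a.1.2 + m + 1 = b.1.2
      push_cast at hab; omega
    exact ⟨p.concat hadj, by rw [SimpleGraph.Walk.length_concat, hp]⟩

lemma spine_reach {a b : ↥(catVerts d L)} (ha : a.1.1 = 0) (hb : b.1.1 = 0) :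
    (caterpillar d L).Reachable a b := by
  rcases le_total a.1.2 b.1.2 with h | h
  · obtain ⟨p, _⟩ := spine_walk ((b.1.2 - a.1.2).toNat) a b ha hb (by omega)
    exact ⟨p⟩
  · obtain ⟨p, _⟩ := spine_walk ((a.1.2 - b.1.2).toNat) b a hb ha (by omega)
    exact ⟨p.reverse⟩

lemma reach_all (a b : ↥(catVerts d L)) : (caterpillar d L).Reachable a b := by
  have hma := mem_catVerts.1 a.2
  have hmb := mem_catVerts.1 b.2
  have ra : (caterpillar d L).Reachable a (sv d L a.1.2 hma.1 hma.2.1) := by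
    by_cases ha : a.1.1 = 0
    · exact spine_reach ha rfl
    · exact (adj_leaf (a := sv d L a.1.2 hma.1 hma.2.1) rfl ha rfl).reachable.symm
  have rb : (caterpillar d L).Reachable b (sv d L b.1.2 hmb.1 hmb.2.1) := by
    by_cases hb : b.1.1 = 0
    · exact spine_reach hb rfl
    · exact (adj_leaf (a := sv d L b.1.2 hmb.1 hmb.2.1) rfl hb rfl).reachable.symm
  exact ra.trans ((spine_reach rfl rfl).trans rb.symm)

lemma walk_lb {a b : ↥(catVerts d L)} (p : (caterpillar d L).Walk a b) :
    |a.1.2 - b.1.2| ≤ (p.length : ℤ) := by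
  induction p with
  | nil => simp
  | @cons u v w h q ih =>
    have h1 := adj_step h
    have h2 := abs_sub_le u.1.2 v.1.2 w.1.2
    rw [SimpleGraph.Walk.length_cons]
    push_cast
    omega

lemma dist_spine_spine {a b : ↥(catVerts d L)} (ha : a.1.1 = 0) (hb : b.1.1 = 0) :
    ((caterpillar d L).dist a b : ℤ) = |a.1.2 - b.1.2| := by
  have hub : ((caterpillar d L).dist a b : ℤ) ≤ |a.1.2 - b.1.2| := by
    rcases le_total a.1.2 b.1.2 with h | h
    · obtain ⟨p, hp⟩ := spine_walk ((b.1.2 - a.1.2).toNat) a b ha hb (by omega)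
      have h2 := SimpleGraph.dist_le p
      rw [hp] at h2
      have habs : |a.1.2 - b.1.2| = b.1.2 - a.1.2 := by
        rw [abs_of_nonpos (by omega), neg_sub]
      omega
    · obtain ⟨p, hp⟩ := spine_walk ((a.1.2 - b.1.2).toNat) b a hb ha (by omega)
      have h2 := SimpleGraph.dist_le p
      rw [hp, SimpleGraph.dist_comm] at h2
      have habs : |a.1.2 - b.1.2| = a.1.2 - b.1.2 := abs_of_nonneg (by omega)
      omega
  obtain ⟨p, hp⟩ := (spine_reach ha hb).exists_walk_length_eq_dist
  have := walk_lb p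
  omega

lemma dist_leaf_step {a b : ↥(catVerts d L)} (ha : a.1.1 ≠ 0) (hab : a ≠ b) :
    ((caterpillar d L).dist a b : ℤ) =
      1 + (caterpillar d L).dist (sv d L a.1.2 (mem_catVerts.1 a.2).1 (mem_catVerts.1 a.2).2.1) b := by
  have hma := mem_catVerts.1 a.2
  set a' := sv d L a.1.2 hma.1 hma.2.1 with ha'
  have hadj : (caterpillar d L).Adj a a' := (adj_leaf (a := a') (b := a) rfl ha rfl).symm
  have hub : (caterpillar d L).dist a b ≤ 1 + (caterpillar d L).dist a' b := by
    obtain ⟨q, hq⟩ := (reach_all a' b).exists_walk_length_eq_dist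
    have h2 := SimpleGraph.dist_le (SimpleGraph.Walk.cons hadj q)
    rw [SimpleGraph.Walk.length_cons, hq] at h2
    omega
  obtain ⟨p, hp⟩ := (reach_all a b).exists_walk_length_eq_dist
  cases p with
  | nil => exact absurd rfl hab
  | @cons _ c _ h q =>
    have hc : c = a' := Subtype.ext (leaf_nbr ha h)
    subst hc
    have := SimpleGraph.dist_le q
    rw [SimpleGraph.Walk.length_cons] at hp
    omega

/-- distance function on coordinates -/
def D (a b : ℤ × ℤ) : ℤ :=
  if a = b then 0 else |a.2 - b.2| + (if a.1 = 0 then 0 else 1) + (if b.1 = 0 then 0 else 1)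

lemma dist_spine_any {a b : ↥(catVerts d L)} (ha : a.1.1 = 0) :
    ((caterpillar d L).dist a b : ℤ) = |a.1.2 - b.1.2| + (if b.1.1 = 0 then 0 else 1) := by
  by_cases hb : b.1.1 = 0
  · rw [dist_spine_spine ha hb]; simp [hb]
  · have hab : b ≠ a := fun h => hb (h ▸ ha)
    rw [SimpleGraph.dist_comm, dist_leaf_step hb hab,
      dist_spine_spine rfl ha]
    simp only [sv]
    rw [if_neg hb, abs_sub_comm]
    ring

lemma dist_formula (a b : ↥(catVerts d L)) :
    ((caterpillar d L).dist a b : ℤ) = D a.1 b.1 := by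
  by_cases hab : a = b
  · subst hab; simp [D]
  · have hab1 : a.1 ≠ b.1 := fun h => hab (Subtype.ext h)
    rw [D, if_neg hab1]
    by_cases ha : a.1.1 = 0
    · rw [dist_spine_any ha, if_pos ha]; ring
    · rw [dist_leaf_step ha hab, dist_spine_any rfl, if_neg ha]
      simp [sv]
      ring

end CatAux

namespace CatAux

lemma D_symm (a b : ℤ × ℤ) : D a b = D b a := by
  unfold D
  rcases eq_or_ne a b with rfl | h
  · simp
  · rw [if_neg h, if_neg (Ne.symm h), abs_sub_comm]; ring

lemma even_double_sum {α : Type*} [DecidableEq α] (s : Finset α) (f : α → α → ℕ)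
    (hsymm : ∀ a b, f a b = f b a) (hdiag : ∀ a, f a a = 0) :
    2 ∣ ∑ a ∈ s, ∑ b ∈ s, f a b := by
  classical
  induction s using Finset.induction_on with
  | empty => simp
  | @insert x t hx ih =>
    simp only [Finset.sum_insert hx]
    rw [Finset.sum_add_distrib, hdiag x]
    have h2 : ∑ a ∈ t, f a x = ∑ b ∈ t, f x b := Finset.sum_congr rfl (fun a _ => hsymm a x)
    rw [h2]
    omega

lemma two_mul_wiener (d : ℤ) (L : ℤ → ℕ) :
    (2 * wiener (caterpillar d L) : ℤ) = ∑ a ∈ catVerts d L, ∑ b ∈ catVerts d L, D a b := by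
  have hdvd : 2 ∣ ∑ u : ↥(catVerts d L), ∑ v : ↥(catVerts d L), (caterpillar d L).dist u v :=
    even_double_sum _ _ (fun a b => SimpleGraph.dist_comm)
      (fun a => SimpleGraph.dist_self)
  have h1 : 2 * wiener (caterpillar d L)
      = ∑ u : ↥(catVerts d L), ∑ v : ↥(catVerts d L), (caterpillar d L).dist u v := by
    rw [wiener, Nat.mul_div_cancel' hdvd]
  have h2 : ((∑ u : ↥(catVerts d L), ∑ v : ↥(catVerts d L), (caterpillar d L).dist u v : ℕ) : ℤ)
      = ∑ a ∈ catVerts d L, ∑ b ∈ catVerts d L, D a b := by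
    push_cast
    rw [← Finset.sum_coe_sort (catVerts d L) (fun a => ∑ b ∈ catVerts d L, D a b)]
    refine Finset.sum_congr rfl (fun u _ => ?_)
    rw [← Finset.sum_coe_sort (catVerts d L) (fun b => D u.1 b)]
    exact Finset.sum_congr rfl (fun v _ => dist_formula u v)
  rw [← h2, ← h1]
  push_cast
  ring

lemma SD_insert {S : Finset (ℤ × ℤ)} {nw : ℤ × ℤ} (hnew : nw ∉ S) :
    ∑ a ∈ insert nw S, ∑ b ∈ insert nw S, D a b
      = (∑ a ∈ S, ∑ b ∈ S, D a b) + 2 * ∑ a ∈ S, D a nw := by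
  rw [Finset.sum_insert hnew]
  simp only [Finset.sum_insert hnew]
  rw [Finset.sum_add_distrib]
  have h0 : D nw nw = 0 := by simp [D]
  have h2 : ∑ b ∈ S, D nw b = ∑ a ∈ S, D a nw :=
    Finset.sum_congr rfl (fun a _ => D_symm _ _)
  rw [h0, h2]
  ring

lemma sum_catVerts (d : ℤ) (L : ℤ → ℕ) (f : ℤ × ℤ → ℤ) :
    ∑ a ∈ catVerts d L, f a
      = ∑ i ∈ Finset.Icc (-d) d, ∑ j ∈ Finset.Icc (0:ℤ) (L i : ℤ), f (j, i) := by
  rw [catVerts, Finset.sum_biUnion]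
  · refine Finset.sum_congr rfl (fun i _ => ?_)
    rw [Finset.sum_image]
    intro a _ b _ h
    exact (Prod.ext_iff.1 h).1
  · intro i _ j _ hij
    apply Finset.disjoint_left.2
    rintro ⟨a, b⟩ ha hb
    simp only [Finset.mem_image, Prod.mk.injEq] at ha hb
    obtain ⟨_, _, _, h1⟩ := ha
    obtain ⟨_, _, _, h2⟩ := hb
    exact hij (h1 ▸ h2 ▸ rfl)

lemma sum_leaf (m : ℕ) (C : ℤ) :
    ∑ j ∈ Finset.Icc (0:ℤ) (m:ℤ), (C + if j = 0 then 0 else 1) = C + m * (C + 1) := by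
  have hins : Finset.Icc (0:ℤ) (m:ℤ) = insert 0 (Finset.Icc (1:ℤ) (m:ℤ)) := by
    ext i; simp [Finset.mem_Icc]; omega
  rw [hins, Finset.sum_insert (by simp)]
  have hcongr : ∀ j ∈ Finset.Icc (1:ℤ) (m:ℤ), (C + if j = 0 then 0 else 1) = C + 1 := by
    intro j hj
    rw [Finset.mem_Icc] at hj
    rw [if_neg (by omega)]
  rw [Finset.sum_congr rfl hcongr, Finset.sum_const, Int.card_Icc]
  rw [if_pos rfl, nsmul_eq_mul]
  have h3 : ((((m:ℤ) + 1 - 1).toNat : ℕ) : ℤ) = m := by omega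
  rw [h3]
  ring

lemma Icc_succ_expand (m : ℤ) (h : 0 ≤ m) :
    Finset.Icc (-(m+1)) (m+1) = insert (-(m+1)) (insert (m+1) (Finset.Icc (-m) m)) := by
  ext i; simp [Finset.mem_Icc]; omega

lemma sum_abs0 (m : ℕ) : ∑ i ∈ Finset.Icc (-(m:ℤ)) (m:ℤ), |i| = m * (m + 1) := by
  induction m with
  | zero => simp
  | succ m ih =>
    have h1 : ((m+1 : ℕ) : ℤ) = (m:ℤ) + 1 := by push_cast; ring
    rw [h1, Icc_succ_expand m (by positivity),
      Finset.sum_insert (by simp only [Finset.mem_insert, Finset.mem_Icc]; omega),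
      Finset.sum_insert (by simp only [Finset.mem_Icc]; omega), ih]
    rw [abs_of_nonpos (by omega), abs_of_nonneg (by omega)]
    push_cast
    ring

lemma sum_abs1 (m : ℕ) (hm : 1 ≤ m) :
    ∑ i ∈ Finset.Icc (-(m:ℤ)) (m:ℤ), |i - 1| = m * (m + 1) + 1 := by
  induction m with
  | zero => omega
  | succ m ih =>
    rcases Nat.eq_or_lt_of_le hm with h | h
    · have : (m : ℕ) = 0 := by omega
      subst this
      norm_num
      have : Finset.Icc (-1:ℤ) 1 = insert (-1) (insert 0 ({1} : Finset ℤ)) := by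
        ext i; simp [Finset.mem_Icc]; omega
      rw [this, Finset.sum_insert (by simp), Finset.sum_insert (by simp)]
      norm_num
    · have hm1 : 1 ≤ m := by omega
      have h1 : ((m+1 : ℕ) : ℤ) = (m:ℤ) + 1 := by push_cast; ring
      rw [h1, Icc_succ_expand m (by positivity),
        Finset.sum_insert (by simp only [Finset.mem_insert, Finset.mem_Icc]; omega),
        Finset.sum_insert (by simp only [Finset.mem_Icc]; omega), ih hm1]
      rw [abs_of_nonpos (by push_cast; omega), abs_of_nonneg (by push_cast; omega)]
      push_cast
      ring

lemma sum_abs_s (m s : ℤ) (hm : 1 ≤ m) (hss : s = 0 ∨ s = 1) :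
    ∑ i ∈ Finset.Icc (-m) m, |i - s| = m * (m + 1) + s ^ 2 := by
  obtain ⟨mm, rfl⟩ : ∃ mm : ℕ, m = (mm : ℤ) := ⟨m.toNat, by omega⟩
  rcases hss with rfl | rfl
  · simpa using sum_abs0 mm
  · have := sum_abs1 mm (by exact_mod_cast hm)
    rw [this]; ring

lemma sum_const_Icc (a b : ℤ) (h : a ≤ b) (c : ℤ) :
    ∑ _i ∈ Finset.Icc a b, c = (b + 1 - a) * c := by
  rw [Finset.sum_const, Int.card_Icc, nsmul_eq_mul]
  have h3 : ((((b + 1 - a).toNat) : ℕ) : ℤ) = b + 1 - a := by omega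
  rw [h3]

end CatAux

namespace CatAux

lemma key (n d x s : ℤ) (hno : Odd n) (hn : 19 ≤ n)
    (hd1 : n - 3 ≤ 4 * d) (hd2 : 2 * d ≤ n - 9)
    (hx1 : 1 ≤ x) (hx2 : 2 * x ≤ 4 + 4 * d - (n - 1))
    (hss : s = 0 ∨ s = 1) :
    (wiener (G3 n d x s) : ℚ)
      = (wiener (B1 (n - 1) d x) : ℚ) + (n : ℚ)^2 / 4 - (d:ℚ) * (n : ℚ)
        + 2 * (d:ℚ)^2 + 5 * (d:ℚ) + 11 / 4 - 2 * (x:ℚ) + 2 * (s:ℚ)^2 := by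
  obtain ⟨t, ht⟩ := hno
  set k : ℤ := (n - 2*d - 5)/2 with hkdef
  have hk : n - 2*d - 5 = 2*k := by omega
  have hd4 : 4 ≤ d := by omega
  have hk2 : 2 ≤ k := by omega
  have hkd : k ≤ d - 1 := by omega
  have hK : (n - 1 - 2*d - 4)/2 = k := by omega
  set L : ℤ → ℕ := B1L (n-1) d x with hLdef
  -- cast of the leaf count function
  have hLcast : ∀ i : ℤ, ((L i : ℕ) : ℤ)
      = (if i = -d-1+x then 1 else 0) + (if i = d+1-x then 1 else 0)
        + (if i ∈ Finset.Icc (-k) k then 1 else 0) := by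
    intro i
    simp only [hLdef, B1L, Finset.mem_Icc, abs_le]
    push_cast
    rw [hK]
    split_ifs <;> omega
  have hLs : ((L s : ℕ) : ℤ) = 1 := by
    rw [hLcast s, if_neg (by omega), if_neg (by omega),
      if_pos (Finset.mem_Icc.2 ⟨by omega, by omega⟩)]
    ring
  -- the new vertex
  have hnewmem : ((2:ℤ), s) ∉ catVerts d L := by
    rw [mem_catVerts]
    show ¬(-d ≤ s ∧ s ≤ d ∧ 0 ≤ (2:ℤ) ∧ (2:ℤ) ≤ ((L s : ℕ) : ℤ))
    omega
  have hS' : catVerts d (fun i => B1L (n-1) d x i + (if i = s then 1 else 0))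
      = insert ((2:ℤ), s) (catVerts d L) := by
    ext ⟨j, i⟩
    simp only [Finset.mem_insert, mem_catVerts, Prod.mk.injEq]
    push_cast
    simp only [← hLdef]
    by_cases h : i = s
    · subst h
      rw [if_pos rfl]
      constructor
      · rintro ⟨h1, h2, h3, h4⟩
        rcases eq_or_ne j 2 with rfl | hj
        · exact Or.inl ⟨rfl, rfl⟩
        · exact Or.inr ⟨h1, h2, h3, by omega⟩
      · rintro (⟨rfl, _⟩ | ⟨h1, h2, h3, h4⟩) <;> refine ⟨by omega, by omega, by omega, by omega⟩
    · rw [if_neg h]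
      constructor
      · rintro ⟨h1, h2, h3, h4⟩
        exact Or.inr ⟨h1, h2, h3, by omega⟩
      · rintro (⟨_, hcon⟩ | ⟨h1, h2, h3, h4⟩)
        · exact absurd hcon h
        · exact ⟨h1, h2, h3, by omega⟩
  -- the sum of distances from the new vertex
  set A : ℤ := ∑ a ∈ catVerts d L, D a ((2:ℤ), s) with hAdef
  have hinner : ∀ i ∈ Finset.Icc (-d) d,
      ∑ j ∈ Finset.Icc (0:ℤ) ((L i : ℕ) : ℤ), D (j, i) ((2:ℤ), s)
        = ((|i - s| + 1) + (L i : ℤ) * (|i - s| + 2)) := by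
    intro i hi
    have hsl := sum_leaf (L i) (|i - s| + 1)
    calc ∑ j ∈ Finset.Icc (0:ℤ) ((L i : ℕ) : ℤ), D (j, i) ((2:ℤ), s)
        = ∑ j ∈ Finset.Icc (0:ℤ) ((L i : ℕ) : ℤ), ((|i - s| + 1) + if j = 0 then 0 else 1) := by
          refine Finset.sum_congr rfl (fun j hj => ?_)
          rw [Finset.mem_Icc] at hj
          have hne : ((j, i) : ℤ × ℤ) ≠ ((2:ℤ), s) := by
            intro hcon
            rw [Prod.mk.injEq] at hcon
            obtain ⟨rfl, rfl⟩ := hcon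
            omega
          rw [D, if_neg hne]
          simp only
          rw [if_neg (by norm_num : (2:ℤ) ≠ 0)]
          split_ifs <;> ring
      _ = (|i - s| + 1) + (L i : ℤ) * (|i - s| + 2) := by rw [hsl]; ring
  have hA1 : A = ∑ i ∈ Finset.Icc (-d) d,
      ((|i - s| + 1) + (L i : ℤ) * (|i - s| + 2)) := by
    rw [hAdef, sum_catVerts]
    exact Finset.sum_congr rfl hinner
  have hsplit : ∀ i ∈ Finset.Icc (-d) d,
      ((|i - s| + 1) + (L i : ℤ) * (|i - s| + 2))
        = (|i - s| + 1) + ((if i = -d-1+x then (|i - s| + 2) else 0)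
          + (if i = d+1-x then (|i - s| + 2) else 0)
          + (if i ∈ Finset.Icc (-k) k then (|i - s| + 2) else 0)) := by
    intro i _
    rw [hLcast i]
    split_ifs <;> ring
  have hq1 : ∑ i ∈ Finset.Icc (-d) d, (if i = -d-1+x then (|i - s| + 2) else 0)
      = |(-d-1+x) - s| + 2 := by
    rw [Finset.sum_ite_eq' (Finset.Icc (-d) d) (-d-1+x) (fun i => |i - s| + 2),
      if_pos (Finset.mem_Icc.2 ⟨by omega, by omega⟩)]
  have hq2 : ∑ i ∈ Finset.Icc (-d) d, (if i = d+1-x then (|i - s| + 2) else 0)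
      = |(d+1-x) - s| + 2 := by
    rw [Finset.sum_ite_eq' (Finset.Icc (-d) d) (d+1-x) (fun i => |i - s| + 2),
      if_pos (Finset.mem_Icc.2 ⟨by omega, by omega⟩)]
  have hq3 : ∑ i ∈ Finset.Icc (-d) d, (if i ∈ Finset.Icc (-k) k then (|i - s| + 2) else 0)
      = ∑ i ∈ Finset.Icc (-k) k, (|i - s| + 2) := by
    rw [Finset.sum_ite_mem]
    congr 1
    exact Finset.inter_eq_right.2 (Finset.Icc_subset_Icc (by omega) (by omega))
  have habs_d : ∑ i ∈ Finset.Icc (-d) d, |i - s| = d * (d+1) + s^2 :=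
    sum_abs_s d s (by omega) hss
  have habs_k : ∑ i ∈ Finset.Icc (-k) k, |i - s| = k * (k+1) + s^2 :=
    sum_abs_s k s (by omega) hss
  have habs1 : |(-d-1+x) - s| = s - (-d-1+x) := by
    rw [abs_of_nonpos (by omega)]; ring
  have habs2 : |(d+1-x) - s| = (d+1-x) - s := abs_of_nonneg (by omega)
  have hAval : A = k^2 + d^2 + 5*k + 5*d + 9 - 2*x + 2*s^2 := by
    rw [hA1, Finset.sum_congr rfl hsplit, Finset.sum_add_distrib, Finset.sum_add_distrib,
      Finset.sum_add_distrib, Finset.sum_add_distrib, hq1, hq2, hq3, habs_d,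
      Finset.sum_add_distrib, habs_k, habs1, habs2,
      sum_const_Icc (-d) d (by omega) 1, sum_const_Icc (-k) k (by omega) 2]
    ring
  -- combine
  have e3 : (2 * (wiener (G3 n d x s) : ℤ)) = (2 * (wiener (B1 (n-1) d x) : ℤ)) + 2 * A := by
    rw [G3, B1, two_mul_wiener, two_mul_wiener, hS', SD_insert hnewmem]
  have e4 : (wiener (G3 n d x s) : ℤ) = (wiener (B1 (n-1) d x) : ℤ) + A := by omega
  have e5 : (wiener (G3 n d x s) : ℚ) = (wiener (B1 (n-1) d x) : ℚ)
      + ((k:ℚ)^2 + (d:ℚ)^2 + 5*(k:ℚ) + 5*(d:ℚ) + 9 - 2*(x:ℚ) + 2*(s:ℚ)^2) := by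
    rw [hAval] at e4
    exact_mod_cast congrArg (fun z : ℤ => (z : ℚ)) e4
  rw [e5]
  have hnq : (n:ℚ) = 2*(k:ℚ) + 2*(d:ℚ) + 5 := by
    exact_mod_cast congrArg (fun z : ℤ => (z : ℚ)) (show n = 2*k + 2*d + 5 by omega)
  rw [hnq]
  ring

end CatAux

/-- `W(G₃(n,d,x,s)) = W(B₁(n−1,d,x)) + n²/4 − dn + 2d² + 5d + 11/4 − 2x + 2s²`;
in particular `W(G₃(n,d,x,1)) = W(G₃(n,d,x,0)) + 2`. -/
theorem wiener_G3 (n d x s : ℤ) (hno : Odd n) (hn : 19 ≤ n)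
    (hd1 : n - 3 ≤ 4 * d) (hd2 : 2 * d ≤ n - 9)
    (hx1 : 1 ≤ x) (hx2 : 2 * x ≤ 4 + 4 * d - (n - 1))
    (hs : s ∈ ({0, 1} : Set ℤ)) :
    (wiener (G3 n d x s) : ℚ)
      = (wiener (B1 (n - 1) d x) : ℚ) + (n : ℚ)^2 / 4 - (d:ℚ) * (n : ℚ)
        + 2 * (d:ℚ)^2 + 5 * (d:ℚ) + 11 / 4 - 2 * (x:ℚ) + 2 * (s:ℚ)^2 ∧
    wiener (G3 n d x 1) = wiener (G3 n d x 0) + 2 := by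
  have hss : s = 0 ∨ s = 1 := by simpa using hs
  constructor
  · exact CatAux.key n d x s hno hn hd1 hd2 hx1 hx2 hss
  · have q1 := CatAux.key n d x 1 hno hn hd1 hd2 hx1 hx2 (Or.inr rfl)
    have q0 := CatAux.key n d x 0 hno hn hd1 hd2 hx1 hx2 (Or.inl rfl)
    have hq : (wiener (G3 n d x 1) : ℚ) = (wiener (G3 n d x 0) : ℚ) + 2 := by
      rw [q1, q0]; push_cast; ring
    exact_mod_cast hq
end

section
/- For integers n, d, x, s for which G₄(n,d,x,s) is defined, W(G₄(n,d,x,s)) = W(B₂(n−1,d,x)) + (2+d)n − 2d² − 3d − 1 + 2s² − 2x, and consequently W(G₄(n,d,x−1,s)) − W(G₄(n,d,x,s)) = 4(x + 2d − 2) for x ≥ 2. -/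
namespace WG4

def ee (j : ℤ) : ℕ := if j = 0 then 0 else 1
def Dfun (p q : ℤ × ℤ) : ℕ :=
  if p = q then 0 else (p.2 - q.2).natAbs + ee p.1 + ee q.1
lemma mem_catVerts {d : ℤ} {L : ℤ → ℕ} {p : ℤ × ℤ} :
    p ∈ catVerts d L ↔ (-d ≤ p.2 ∧ p.2 ≤ d) ∧ 0 ≤ p.1 ∧ p.1 ≤ (L p.2 : ℤ) := by
  obtain ⟨j, i⟩ := p
  simp only [catVerts, Finset.mem_biUnion, Finset.mem_Icc, Finset.mem_image, Prod.mk.injEq]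
  constructor
  · rintro ⟨i', hi', j', hj', rfl, rfl⟩; exact ⟨hi', hj'⟩
  · rintro ⟨hi, hj⟩; exact ⟨i, hi, j, hj, rfl, rfl⟩
lemma adj_iff {d : ℤ} {L : ℤ → ℕ} (u v : ↥(catVerts d L)) :
    (caterpillar d L).Adj u v ↔ u.1 ≠ v.1 ∧
      ((u.1.1 = 0 ∧ v.1.1 = 0 ∧ (u.1.2 + 1 = v.1.2 ∨ v.1.2 + 1 = u.1.2)) ∨
       (u.1.2 = v.1.2 ∧ (u.1.1 = 0 ∧ v.1.1 ≠ 0 ∨ v.1.1 = 0 ∧ u.1.1 ≠ 0))) := by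
  rw [caterpillar, SimpleGraph.fromRel_adj]
  constructor
  · rintro ⟨hne, h | h⟩
    · refine ⟨fun he => hne (Subtype.ext he), ?_⟩; tauto
    · refine ⟨fun he => hne (Subtype.ext he), ?_⟩; tauto
  · rintro ⟨hne, h⟩
    refine ⟨fun he => hne (congrArg Subtype.val he), ?_⟩; tauto
lemma D_step {d : ℤ} {L : ℤ → ℕ} {u w : ↥(catVerts d L)}
    (h : (caterpillar d L).Adj u w) (v : ℤ × ℤ) : Dfun u.1 v ≤ Dfun w.1 v + 1 := by
  rw [adj_iff] at h
  obtain ⟨hne, hc⟩ := h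
  unfold Dfun ee
  split_ifs <;> subst_eqs <;> (try omega) <;>
    rcases hc with ⟨h1, h2, h3 | h3⟩ | ⟨h1, ⟨h2, h3⟩ | ⟨h2, h3⟩⟩ <;>
    simp_all [Prod.ext_iff] <;> omega
lemma D_le_walk {d : ℤ} {L : ℤ → ℕ} {u v : ↥(catVerts d L)}
    (p : (caterpillar d L).Walk u v) : Dfun u.1 v.1 ≤ p.length := by
  induction p with
  | nil => simp [Dfun]
  | @cons a b c h q ih =>
    have := D_step h c.1
    simp only [SimpleGraph.Walk.length_cons]
    omega

lemma spine_mem (d : ℤ) (L : ℤ → ℕ) {i : ℤ} (h1 : -d ≤ i) (h2 : i ≤ d) :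
    ((0:ℤ), i) ∈ catVerts d L :=
  mem_catVerts.2 ⟨⟨h1, h2⟩, le_refl 0, Int.natCast_nonneg _⟩

lemma spine_mem_of {d : ℤ} {L : ℤ → ℕ} (u : ↥(catVerts d L)) :
    ((0:ℤ), u.1.2) ∈ catVerts d L := by
  have := mem_catVerts.1 u.2
  exact spine_mem d L this.1.1 this.1.2

lemma adj_spine {d : ℤ} {L : ℤ → ℕ} {i i' : ℤ} (h1 : -d ≤ i) (h2 : i ≤ d)
    (h1' : -d ≤ i') (h2' : i' ≤ d) (h : i' = i + 1 ∨ i = i' + 1) :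
    (caterpillar d L).Adj ⟨((0:ℤ), i), spine_mem d L h1 h2⟩ ⟨((0:ℤ), i'), spine_mem d L h1' h2'⟩ := by
  rw [adj_iff]
  constructor
  · have hne : i ≠ i' := by rcases h with h | h <;> omega
    simp only [ne_eq, Prod.mk.injEq, not_and]
    exact fun _ => hne
  · left; exact ⟨rfl, rfl, by show i + 1 = i' ∨ i' + 1 = i; omega⟩

lemma adj_leaf {d : ℤ} {L : ℤ → ℕ} (u : ↥(catVerts d L)) (hj : u.1.1 ≠ 0) :
    (caterpillar d L).Adj ⟨((0:ℤ), u.1.2), spine_mem_of u⟩ u := by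
  rw [adj_iff]
  refine ⟨?_, Or.inr ⟨rfl, Or.inl ⟨rfl, hj⟩⟩⟩
  intro h'
  exact hj (congrArg Prod.fst h').symm

lemma exists_spine_walk (d : ℤ) (L : ℤ → ℕ) :
    ∀ (m : ℕ) (i i' : ℤ) (h1 : -d ≤ i) (h2 : i ≤ d) (h1' : -d ≤ i') (h2' : i' ≤ d),
      (i' - i).natAbs = m →
      ∃ p : (caterpillar d L).Walk ⟨((0:ℤ), i), spine_mem d L h1 h2⟩
          ⟨((0:ℤ), i'), spine_mem d L h1' h2'⟩, p.length = m := by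
  intro m
  induction m with
  | zero =>
    intro i i' h1 h2 h1' h2' hm
    have : i' = i := by omega
    subst this
    exact ⟨SimpleGraph.Walk.nil, rfl⟩
  | succ m ih =>
    intro i i' h1 h2 h1' h2' hm
    rcases lt_or_ge i i' with h | h
    · have hb1 : -d ≤ i + 1 := by omega
      have hb2 : i + 1 ≤ d := by omega
      obtain ⟨p, hp⟩ := ih (i+1) i' hb1 hb2 h1' h2' (by omega)
      exact ⟨SimpleGraph.Walk.cons (adj_spine h1 h2 hb1 hb2 (Or.inl rfl)) p, by simp [hp]⟩
    · have hb1 : -d ≤ i - 1 := by omega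
      have hb2 : i - 1 ≤ d := by omega
      obtain ⟨p, hp⟩ := ih (i-1) i' hb1 hb2 h1' h2' (by omega)
      exact ⟨SimpleGraph.Walk.cons (adj_spine h1 h2 hb1 hb2 (Or.inr (by omega))) p, by simp [hp]⟩

lemma exists_walk_spine {d : ℤ} {L : ℤ → ℕ} (u : ↥(catVerts d L)) :
    ∃ p : (caterpillar d L).Walk u ⟨((0:ℤ), u.1.2), spine_mem_of u⟩, p.length = ee u.1.1 := by
  by_cases hj : u.1.1 = 0
  · have he : (⟨((0:ℤ), u.1.2), spine_mem_of u⟩ : ↥(catVerts d L)) = u := by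
      apply Subtype.ext
      exact Prod.ext hj.symm rfl
    exact ⟨(SimpleGraph.Walk.nil).copy he rfl, by simp [ee, hj]⟩
  · exact ⟨(adj_leaf u hj).symm.toWalk, by simp [ee, hj]⟩

theorem dist_eq {d : ℤ} {L : ℤ → ℕ} (u v : ↥(catVerts d L)) :
    (caterpillar d L).dist u v = Dfun u.1 v.1 := by
  by_cases huv : u = v
  · subst huv
    simp [Dfun, SimpleGraph.dist_self]
  · have hu := mem_catVerts.1 u.2
    have hv := mem_catVerts.1 v.2
    obtain ⟨p1, hp1⟩ := exists_walk_spine u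
    obtain ⟨p3, hp3⟩ := exists_walk_spine v
    obtain ⟨p2, hp2⟩ := exists_spine_walk d L (v.1.2 - u.1.2).natAbs u.1.2 v.1.2
      hu.1.1 hu.1.2 hv.1.1 hv.1.2 rfl
    set w : (caterpillar d L).Walk u v := (p1.append p2).append p3.reverse with hw
    have hlen : w.length = Dfun u.1 v.1 := by
      have hne : u.1 ≠ v.1 := fun h => huv (Subtype.ext h)
      simp [hw, SimpleGraph.Walk.length_append, SimpleGraph.Walk.length_reverse,
        hp1, hp2, hp3, Dfun, if_neg hne, huv]
      omega
    have h1 : (caterpillar d L).dist u v ≤ Dfun u.1 v.1 := hlen ▸ SimpleGraph.dist_le w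
    have hr : (caterpillar d L).Reachable u v := ⟨w⟩
    obtain ⟨q, hq⟩ := hr.exists_walk_length_eq_dist
    have h2 := D_le_walk q
    omega


lemma card_Icc0 (m : ℕ) : (Finset.Icc (0:ℤ) (m:ℤ)).card = m + 1 := by
  rw [Int.card_Icc]; omega

lemma sumE (m : ℕ) : ∑ j ∈ Finset.Icc (0:ℤ) (m:ℤ), ee j = m := by
  have h0 : (0:ℤ) ∈ Finset.Icc (0:ℤ) (m:ℤ) := by simp
  rw [← Finset.add_sum_erase _ ee h0]
  have : ∑ j ∈ (Finset.Icc (0:ℤ) (m:ℤ)).erase 0, ee j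
      = ∑ j ∈ (Finset.Icc (0:ℤ) (m:ℤ)).erase 0, 1 := by
    refine Finset.sum_congr rfl fun j hj => ?_
    have := Finset.ne_of_mem_erase hj
    simp [ee, this]
  rw [this, Finset.sum_const, smul_eq_mul, mul_one, Finset.card_erase_of_mem h0, card_Icc0]
  simp [ee]

def blk (L : ℤ → ℕ) (i i' : ℤ) : ℕ :=
  if i = i' then 2 * L i * L i
  else (L i + 1) * (L i' + 1) * (i - i').natAbs + (L i' + 1) * L i + (L i + 1) * L i'

lemma block_eq (L : ℤ → ℕ) (i i' : ℤ) :
    ∑ j ∈ Finset.Icc (0:ℤ) (L i : ℤ), ∑ j' ∈ Finset.Icc (0:ℤ) (L i' : ℤ),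
      Dfun (j, i) (j', i') = blk L i i' := by
  by_cases h : i = i'
  · subst h
    have hin : ∀ j ∈ Finset.Icc (0:ℤ) (L i : ℤ),
        ∑ j' ∈ Finset.Icc (0:ℤ) (L i : ℤ), Dfun (j, i) (j', i)
          = if j = 0 then L i else (L i - 1) + L i := by
      intro j hj
      have hD : ∀ j' : ℤ, Dfun (j, i) (j', i) = if j' = j then 0 else ee j + ee j' := by
        intro j'
        by_cases hjj : j' = j
        · subst hjj; simp [Dfun]
        · have : (j, i) ≠ (j', i) := by simp [Prod.ext_iff]; intro hc; omega
          unfold Dfun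
          rw [if_neg this, if_neg hjj]
          simp
      simp only [hD]
      rw [← Finset.add_sum_erase _ _ hj, if_pos rfl]
      have hcongr : ∑ j' ∈ (Finset.Icc (0:ℤ) (L i : ℤ)).erase j, (if j' = j then 0 else ee j + ee j')
          = ∑ j' ∈ (Finset.Icc (0:ℤ) (L i : ℤ)).erase j, (ee j + ee j') := by
        refine Finset.sum_congr rfl fun j' hj' => ?_
        rw [if_neg (Finset.ne_of_mem_erase hj')]
      rw [hcongr, Finset.sum_add_distrib, Finset.sum_const, smul_eq_mul,
        Finset.card_erase_of_mem hj, card_Icc0]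
      have hE : ee j + ∑ j' ∈ (Finset.Icc (0:ℤ) (L i : ℤ)).erase j, ee j'
          = ∑ j' ∈ Finset.Icc (0:ℤ) (L i : ℤ), ee j' := Finset.add_sum_erase _ ee hj
      rw [sumE] at hE
      by_cases hj0 : j = 0
      · subst hj0; simp [ee] at hE ⊢; omega
      · have : ee j = 1 := by simp [ee, hj0]
        rw [if_neg hj0, this]
        omega
    rw [Finset.sum_congr rfl hin]
    rw [blk, if_pos rfl]
    have h0 : (0:ℤ) ∈ Finset.Icc (0:ℤ) (L i : ℤ) := by simp
    rw [← Finset.add_sum_erase _ _ h0, if_pos rfl]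
    have : ∑ j ∈ (Finset.Icc (0:ℤ) (L i : ℤ)).erase 0, (if j = 0 then L i else (L i - 1) + L i)
        = ∑ j ∈ (Finset.Icc (0:ℤ) (L i : ℤ)).erase 0, ((L i - 1) + L i) := by
      refine Finset.sum_congr rfl fun j hj => if_neg (Finset.ne_of_mem_erase hj)
    rw [this, Finset.sum_const, smul_eq_mul, Finset.card_erase_of_mem h0, card_Icc0]
    cases hL : L i with
    | zero => simp
    | succ m => simp only [Nat.add_sub_cancel, Nat.succ_sub_one]; ring
  · have hD : ∀ j j' : ℤ, Dfun (j, i) (j', i') = (i - i').natAbs + ee j + ee j' := by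
      intro j j'
      have : (j, i) ≠ (j', i') := by simp [Prod.ext_iff]; intro hc; omega
      unfold Dfun
      rw [if_neg this]
    simp only [hD]
    simp only [Finset.sum_add_distrib, Finset.sum_const, smul_eq_mul, card_Icc0, sumE, mul_one]
    rw [blk, if_neg h]
    have : ∑ x ∈ Finset.Icc (0:ℤ) (L i : ℤ), (L i' + 1) * ee x
        = (L i' + 1) * L i := by
      rw [← Finset.mul_sum, sumE]
    rw [this]
    ring


lemma sum_catVerts {d : ℤ} {L : ℤ → ℕ} {M : Type*} [AddCommMonoid M] (g : ℤ × ℤ → M) :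
    ∑ p ∈ catVerts d L, g p
      = ∑ i ∈ Finset.Icc (-d) d, ∑ j ∈ Finset.Icc (0:ℤ) (L i : ℤ), g (j, i) := by
  rw [catVerts, Finset.sum_biUnion]
  · refine Finset.sum_congr rfl fun i _ => ?_
    rw [Finset.sum_image]
    intro a _ b _ hab
    simpa using hab
  · intro a _ b _ hab
    simp only [Finset.disjoint_left, Finset.mem_image]
    rintro p ⟨j, _, rfl⟩ ⟨j', _, hp⟩
    apply hab
    exact congrArg Prod.snd hp.symm

lemma even_sum_sym {α : Type*} [DecidableEq α] [LinearOrder α] (s : Finset α) (f : α → α → ℕ)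
    (hsym : ∀ i j, f i j = f j i) (hdiag : ∀ i, Even (f i i)) :
    Even (∑ i ∈ s, ∑ j ∈ s, f i j) := by
  rw [← Finset.sum_product']
  rw [← Finset.sum_filter_add_sum_filter_not (s ×ˢ s) (fun p => p.1 < p.2)]
  rw [← Finset.sum_filter_add_sum_filter_not ((s ×ˢ s).filter (fun p => ¬ p.1 < p.2))
    (fun p => p.2 < p.1)]
  have h1 : ∑ p ∈ ((s ×ˢ s).filter (fun p => ¬ p.1 < p.2)).filter (fun p => p.2 < p.1), f p.1 p.2
      = ∑ p ∈ (s ×ˢ s).filter (fun p => p.1 < p.2), f p.1 p.2 := by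
    refine Finset.sum_nbij' (fun p => Prod.swap p) (fun p => Prod.swap p) ?_ ?_ ?_ ?_ ?_
    · intro a ha
      simp only [Finset.mem_filter, Finset.mem_product] at ha ⊢
      exact ⟨⟨ha.1.1.2, ha.1.1.1⟩, ha.2⟩
    · intro a ha
      simp only [Finset.mem_filter, Finset.mem_product] at ha ⊢
      exact ⟨⟨⟨ha.1.2, ha.1.1⟩, not_lt_of_gt ha.2⟩, ha.2⟩
    · intro a _; simp
    · intro a _; simp
    · intro a _; exact hsym a.1 a.2
  have h2 : Even (∑ p ∈ ((s ×ˢ s).filter (fun p => ¬ p.1 < p.2)).filter (fun p => ¬ p.2 < p.1),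
      f p.1 p.2) := by
    refine Finset.sum_induction _ Even (fun a b => Even.add) Even.zero ?_
    intro p hp
    simp only [Finset.mem_filter] at hp
    have : p.1 = p.2 := le_antisymm (not_lt.1 hp.2) (not_lt.1 hp.1.2)
    rw [this]
    exact hdiag p.2
  rw [h1]
  obtain ⟨k, hk⟩ := h2
  exact ⟨∑ p ∈ (s ×ˢ s).filter (fun p => p.1 < p.2), f p.1 p.2 + k, by omega⟩

noncomputable def SB (d : ℤ) (L : ℤ → ℕ) : ℕ :=
  ∑ i ∈ Finset.Icc (-d) d, ∑ i' ∈ Finset.Icc (-d) d, blk L i i'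

lemma blk_symm (L : ℤ → ℕ) (i i' : ℤ) : blk L i i' = blk L i' i := by
  unfold blk
  by_cases h : i = i'
  · subst h; simp
  · have hn : (i - i').natAbs = (i' - i).natAbs := by omega
    rw [if_neg h, if_neg (fun hc => h hc.symm), hn]
    ring

lemma sum_dist_eq (d : ℤ) (L : ℤ → ℕ) :
    ∑ u : ↥(catVerts d L), ∑ v : ↥(catVerts d L), (caterpillar d L).dist u v = SB d L := by
  have h1 : ∀ u : ↥(catVerts d L),
      ∑ v : ↥(catVerts d L), (caterpillar d L).dist u v
        = ∑ q ∈ catVerts d L, Dfun u.1 q := by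
    intro u
    rw [← Finset.sum_coe_sort (catVerts d L) (fun q => Dfun u.1 q)]
    exact Finset.sum_congr rfl fun v _ => dist_eq u v
  simp only [h1]
  rw [Finset.sum_coe_sort (catVerts d L) (fun p => ∑ q ∈ catVerts d L, Dfun p q)]
  rw [sum_catVerts (fun p => ∑ q ∈ catVerts d L, Dfun p q)]
  rw [SB]
  refine Finset.sum_congr rfl fun i _ => ?_
  have step1 : ∀ j : ℤ, ∑ q ∈ catVerts d L, Dfun (j, i) q
      = ∑ i' ∈ Finset.Icc (-d) d, ∑ j' ∈ Finset.Icc (0:ℤ) (L i' : ℤ), Dfun (j, i) (j', i') :=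
    fun j => sum_catVerts (fun q => Dfun (j, i) q)
  simp only [step1]
  rw [Finset.sum_comm]
  exact Finset.sum_congr rfl fun i' _ => block_eq L i i'

lemma even_SB (d : ℤ) (L : ℤ → ℕ) : Even (SB d L) := by
  refine even_sum_sym _ _ (blk_symm L) fun i => ?_
  refine ⟨L i * L i, ?_⟩
  unfold blk
  rw [if_pos rfl]
  ring

lemma two_wiener (d : ℤ) (L : ℤ → ℕ) :
    2 * wiener (caterpillar d L) = SB d L := by
  unfold wiener
  rw [sum_dist_eq]
  exact Nat.mul_div_cancel' (even_iff_two_dvd.1 (even_SB d L))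


lemma gauss (a : ℤ) : ∀ b : ℤ, a - 1 ≤ b → 2 * ∑ i ∈ Finset.Icc a b, i = (b - a + 1) * (a + b) := by
  refine Int.le_induction ?_ ?_
  · rw [Finset.Icc_eq_empty (by omega)]
    simp
  · intro b _ ih
    have hins : Finset.Icc a (b + 1) = insert (b + 1) (Finset.Icc a b) := by
      ext i; simp only [Finset.mem_Icc, Finset.mem_insert]; omega
    have hni : (b + 1) ∉ Finset.Icc a b := by simp
    rw [hins, Finset.sum_insert hni]
    ring_nf
    ring_nf at ih
    linarith

lemma sum_abs_right (a b p : ℤ) (hab : a ≤ b + 1) (hp : b ≤ p) :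
    2 * ∑ i ∈ Finset.Icc a b, (((p - i).natAbs : ℤ)) = (b - a + 1) * (2*p - a - b) := by
  have hc : ∀ i ∈ Finset.Icc a b, (((p - i).natAbs : ℤ)) = p - i := by
    intro i hi
    simp only [Finset.mem_Icc] at hi
    omega
  rw [Finset.sum_congr rfl hc, Finset.sum_sub_distrib, Finset.sum_const, Int.card_Icc]
  have := gauss a b (by omega)
  have hcard : ((b + 1 - a).toNat : ℤ) = b + 1 - a := by omega
  rw [nsmul_eq_mul]
  push_cast [hcard]
  linarith

lemma sum_abs_left (a b p : ℤ) (hab : a ≤ b + 1) (hp : p ≤ a) :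
    2 * ∑ i ∈ Finset.Icc a b, (((p - i).natAbs : ℤ)) = (b - a + 1) * (a + b - 2*p) := by
  have hc : ∀ i ∈ Finset.Icc a b, (((p - i).natAbs : ℤ)) = i - p := by
    intro i hi
    simp only [Finset.mem_Icc] at hi
    omega
  rw [Finset.sum_congr rfl hc, Finset.sum_sub_distrib, Finset.sum_const, Int.card_Icc]
  have := gauss a b (by omega)
  have hcard : ((b + 1 - a).toNat : ℤ) = b + 1 - a := by omega
  rw [nsmul_eq_mul]
  push_cast [hcard]
  linarith

lemma sum_abs_mid (a b p : ℤ) (h1 : a ≤ p) (h2 : p ≤ b) :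
    2 * ∑ i ∈ Finset.Icc a b, (((p - i).natAbs : ℤ))
      = (p - a) * (p - a + 1) + (b - p) * (b - p + 1) := by
  have hsplit : Finset.Icc a b = Finset.Icc a p ∪ Finset.Icc (p+1) b := by
    ext i; simp only [Finset.mem_Icc, Finset.mem_union]; omega
  have hdisj : Disjoint (Finset.Icc a p) (Finset.Icc (p+1) b) := by
    rw [Finset.disjoint_left]
    intro i hi hi'
    simp only [Finset.mem_Icc] at hi hi'
    omega
  rw [hsplit, Finset.sum_union hdisj]
  have e1 := sum_abs_right a p p (by omega) le_rfl
  have e2 := sum_abs_left (p+1) b p (by omega) (by omega)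
  by_cases hb : p + 1 ≤ b + 1
  · ring_nf
    ring_nf at e1 e2
    linarith
  · have : Finset.Icc (p+1) b = ∅ := Finset.Icc_eq_empty (by omega)
    rw [this]
    simp only [Finset.sum_empty]
    ring_nf
    ring_nf at e1
    have : p = b := by omega
    subst this
    linarith
section
variable (L : ℤ → ℕ) (p : ℤ)

lemma blk_off {i i' : ℤ} (hi : i ≠ p) (hi' : i' ≠ p) :
    blk (fun t => L t + if t = p then 1 else 0) i i' = blk L i i' := by
  unfold blk
  simp only [if_neg hi, if_neg hi', add_zero]

lemma blk_row {i' : ℤ} (hi' : i' ≠ p) :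
    (blk (fun t => L t + if t = p then 1 else 0) p i' : ℤ) = blk L p i' + (((L i' : ℤ) + 1) * ((p - i').natAbs + 1) + L i') := by
  have hne : p ≠ i' := fun h => hi' h.symm
  unfold blk
  rw [if_neg hne, if_neg hne]
  simp only [if_pos rfl, if_neg hi']
  push_cast
  ring

lemma blk_col {i : ℤ} (hi : i ≠ p) :
    (blk (fun t => L t + if t = p then 1 else 0) i p : ℤ) = blk L i p + (((L i : ℤ) + 1) * ((i - p).natAbs + 1) + L i) := by
  have hne : i ≠ p := hi
  unfold blk
  rw [if_neg hne, if_neg hne]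
  simp only [if_pos rfl, if_neg hi]
  push_cast
  ring

lemma blk_corner : (blk (fun t => L t + if t = p then 1 else 0) p p : ℤ) = blk L p p + 4 * L p + 2 := by
  unfold blk
  rw [if_pos rfl, if_pos rfl]
  simp only [if_pos rfl]
  push_cast
  ring

end

lemma SB_addLeaf (d p : ℤ) (L : ℤ → ℕ) (hd : 0 ≤ d) (hp : p ∈ Finset.Icc (-d) d) :
    (SB d (fun t => L t + if t = p then 1 else 0) : ℤ)
      = SB d L + 2 * ((∑ i ∈ Finset.Icc (-d) d, ((L i : ℤ) + 1) * ((p - i).natAbs : ℤ))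
          + 2 * (∑ i ∈ Finset.Icc (-d) d, (L i : ℤ)) + 2 * d + 1) := by
  classical
  set I := Finset.Icc (-d) d with hI
  set L2 : ℤ → ℕ := fun t => L t + if t = p then 1 else 0 with hL2
  set X : ℤ → ℤ := fun i => ((L i : ℤ) + 1) * (((p - i).natAbs : ℤ) + 1) + L i with hX
  have habs : ∀ i : ℤ, ((i - p).natAbs : ℤ) = ((p - i).natAbs : ℤ) := by intro i; omega
  -- cast SB to integer double sums
  have hcast : ∀ (M : ℤ → ℕ), (SB d M : ℤ) = ∑ i ∈ I, ∑ i' ∈ I, (blk M i i' : ℤ) := by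
    intro M
    rw [SB]
    push_cast
    rfl
  rw [hcast, hcast]
  -- decompose over p
  have hrow : ∀ (M : ℤ → ℕ), ∑ i ∈ I, ∑ i' ∈ I, (blk M i i' : ℤ)
      = (blk M p p : ℤ) + ∑ i' ∈ I.erase p, (blk M p i' : ℤ)
        + ∑ i ∈ I.erase p, ((blk M i p : ℤ) + ∑ i' ∈ I.erase p, (blk M i i' : ℤ)) := by
    intro M
    rw [← Finset.add_sum_erase I _ hp]
    congr 1
    · exact (Finset.add_sum_erase I _ hp).symm
    · refine Finset.sum_congr rfl fun i _ => ?_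
      exact (Finset.add_sum_erase I _ hp).symm
  rw [hrow, hrow]
  have h1 : (blk L2 p p : ℤ) = blk L p p + 4 * L p + 2 := blk_corner L p
  have h2 : ∑ i' ∈ I.erase p, (blk L2 p i' : ℤ)
      = ∑ i' ∈ I.erase p, (blk L p i' : ℤ) + ∑ i' ∈ I.erase p, X i' := by
    rw [← Finset.sum_add_distrib]
    refine Finset.sum_congr rfl fun i' hi' => ?_
    exact blk_row L p (Finset.ne_of_mem_erase hi')
  have h3 : ∑ i ∈ I.erase p, ((blk L2 i p : ℤ) + ∑ i' ∈ I.erase p, (blk L2 i i' : ℤ))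
      = ∑ i ∈ I.erase p, ((blk L i p : ℤ) + ∑ i' ∈ I.erase p, (blk L i i' : ℤ))
        + ∑ i ∈ I.erase p, X i := by
    rw [← Finset.sum_add_distrib]
    refine Finset.sum_congr rfl fun i hi => ?_
    have hip := Finset.ne_of_mem_erase hi
    have e1 := blk_col L p hip
    rw [habs i] at e1
    have e2 : ∑ i' ∈ I.erase p, (blk L2 i i' : ℤ) = ∑ i' ∈ I.erase p, (blk L i i' : ℤ) := by
      refine Finset.sum_congr rfl fun i' hi' => ?_
      rw [blk_off L p hip (Finset.ne_of_mem_erase hi')]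
    rw [e1, e2]
    ring
  rw [h1, h2, h3]
  -- now express erase-sum of X via the full sums
  have hXp : X p + ∑ i ∈ I.erase p, X i = ∑ i ∈ I, X i := Finset.add_sum_erase I X hp
  have hXpv : X p = 2 * (L p : ℤ) + 1 := by
    rw [hX]
    simp only [sub_self, Int.natAbs_zero, Int.natCast_zero, zero_add, mul_one]
    ring
  have hcard : ((I.card : ℤ)) = 2 * d + 1 := by
    rw [hI, Int.card_Icc]
    omega
  have hXsum : ∑ i ∈ I, X i
      = (∑ i ∈ I, ((L i : ℤ) + 1) * ((p - i).natAbs : ℤ))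
        + 2 * (∑ i ∈ I, (L i : ℤ)) + 2 * d + 1 := by
    rw [hX]
    have : ∀ i ∈ I, ((L i : ℤ) + 1) * (((p - i).natAbs : ℤ) + 1) + L i
        = ((L i : ℤ) + 1) * ((p - i).natAbs : ℤ) + 2 * (L i : ℤ) + 1 := by
      intro i _; ring
    rw [Finset.sum_congr rfl this]
    simp only [Finset.sum_add_distrib, Finset.sum_const, nsmul_eq_mul, mul_one]
    rw [← Finset.mul_sum, hcard]
    ring
  linarith [hXp, hXsum]

def genL (d : ℤ) (a a' b b' : ℕ) : ℤ → ℕ := fun i =>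
  (if |i| ≤ d - 2 then 1 else 0) + (if i = d - 1 then a else 0) + (if i = -(d-1) then a' else 0)
  + (if i = d then b else 0) + (if i = -d then b' else 0)

lemma B2L_eq_genL (m d x : ℤ) (hd : 2 ≤ d) :
    B2L m d x = genL d x.toNat x.toNat ((m - 4*d - 2*x + 2)/2).toNat ((m - 4*d - 2*x + 2)/2).toNat := by
  funext i
  unfold B2L genL
  rcases le_or_gt 0 i with h | h
  · rw [abs_of_nonneg h]; split_ifs <;> omega
  · rw [abs_of_neg h]; split_ifs <;> omega

lemma addLeaf_a (d : ℤ) (hd : 2 ≤ d) (a a' b b' : ℕ) :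
    (fun t => genL d a a' b b' t + if t = d - 1 then 1 else 0) = genL d (a+1) a' b b' := by
  funext i
  unfold genL
  rcases le_or_gt 0 i with h | h
  · rw [abs_of_nonneg h]; split_ifs <;> omega
  · rw [abs_of_neg h]; split_ifs <;> omega

lemma addLeaf_a' (d : ℤ) (hd : 2 ≤ d) (a a' b b' : ℕ) :
    (fun t => genL d a a' b b' t + if t = -(d - 1) then 1 else 0) = genL d a (a'+1) b b' := by
  funext i
  unfold genL
  rcases le_or_gt 0 i with h | h
  · rw [abs_of_nonneg h]; split_ifs <;> omega
  · rw [abs_of_neg h]; split_ifs <;> omega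

lemma addLeaf_b (d : ℤ) (hd : 2 ≤ d) (a a' b b' : ℕ) :
    (fun t => genL d a a' b b' t + if t = d then 1 else 0) = genL d a a' (b+1) b' := by
  funext i
  unfold genL
  rcases le_or_gt 0 i with h | h
  · rw [abs_of_nonneg h]; split_ifs <;> omega
  · rw [abs_of_neg h]; split_ifs <;> omega

lemma addLeaf_b' (d : ℤ) (hd : 2 ≤ d) (a a' b b' : ℕ) :
    (fun t => genL d a a' b b' t + if t = -d then 1 else 0) = genL d a a' b (b'+1) := by
  funext i
  unfold genL
  rcases le_or_gt 0 i with h | h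
  · rw [abs_of_nonneg h]; split_ifs <;> omega
  · rw [abs_of_neg h]; split_ifs <;> omega

lemma filter_abs (d : ℤ) (hd : 2 ≤ d) :
    (Finset.Icc (-d) d).filter (fun i => |i| ≤ d - 2) = Finset.Icc (-(d-2)) (d-2) := by
  ext i
  simp only [Finset.mem_filter, Finset.mem_Icc, abs_le]
  omega

lemma sum_genL (d : ℤ) (hd : 2 ≤ d) (a a' b b' : ℕ) :
    ∑ i ∈ Finset.Icc (-d) d, (genL d a a' b b' i : ℤ) = 2*d - 3 + a + a' + b + b' := by
  unfold genL
  push_cast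
  simp only [Finset.sum_add_distrib]
  rw [Finset.sum_ite_eq' (Finset.Icc (-d) d) (d-1) (fun _ => (a:ℤ)),
    Finset.sum_ite_eq' (Finset.Icc (-d) d) (-(d-1)) (fun _ => (a':ℤ)),
    Finset.sum_ite_eq' (Finset.Icc (-d) d) d (fun _ => (b:ℤ)),
    Finset.sum_ite_eq' (Finset.Icc (-d) d) (-d) (fun _ => (b':ℤ)),
    ← Finset.sum_filter, filter_abs d hd]
  rw [if_pos (by simp only [Finset.mem_Icc]; omega), if_pos (by simp only [Finset.mem_Icc]; omega),
    if_pos (by simp only [Finset.mem_Icc]; omega), if_pos (by simp only [Finset.mem_Icc]; omega)]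
  rw [Finset.sum_const, Int.card_Icc, nsmul_eq_mul]
  have : (((d - 2) + 1 - -(d-2)).toNat : ℤ) = 2*d - 3 := by omega
  push_cast [this]
  ring

lemma Tsum_genL (d : ℤ) (hd : 2 ≤ d) (a a' b b' : ℕ) (p : ℤ) :
    ∑ i ∈ Finset.Icc (-d) d, ((genL d a a' b b' i : ℤ) + 1) * ((p - i).natAbs : ℤ)
      = (∑ i ∈ Finset.Icc (-d) d, ((p - i).natAbs : ℤ))
        + (∑ i ∈ Finset.Icc (-(d-2)) (d-2), ((p - i).natAbs : ℤ))
        + a * ((p - (d-1)).natAbs : ℤ) + a' * ((p + (d-1)).natAbs : ℤ)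
        + b * ((p - d).natAbs : ℤ) + b' * ((p + d).natAbs : ℤ) := by
  have hpt : ∀ i : ℤ, ((genL d a a' b b' i : ℤ) + 1) * ((p - i).natAbs : ℤ)
      = ((p - i).natAbs : ℤ)
        + (if |i| ≤ d - 2 then ((p - i).natAbs : ℤ) else 0)
        + (if i = d - 1 then (a : ℤ) * ((p - i).natAbs : ℤ) else 0)
        + (if i = -(d-1) then (a' : ℤ) * ((p - i).natAbs : ℤ) else 0)
        + (if i = d then (b : ℤ) * ((p - i).natAbs : ℤ) else 0)
        + (if i = -d then (b' : ℤ) * ((p - i).natAbs : ℤ) else 0) := by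
    intro i
    unfold genL
    push_cast
    split_ifs <;> ring
  rw [Finset.sum_congr rfl (fun i _ => hpt i)]
  simp only [Finset.sum_add_distrib]
  rw [Finset.sum_ite_eq' (Finset.Icc (-d) d) (d-1),
    Finset.sum_ite_eq' (Finset.Icc (-d) d) (-(d-1)),
    Finset.sum_ite_eq' (Finset.Icc (-d) d) d,
    Finset.sum_ite_eq' (Finset.Icc (-d) d) (-d),
    ← Finset.sum_filter, filter_abs d hd]
  rw [if_pos (by simp only [Finset.mem_Icc]; omega), if_pos (by simp only [Finset.mem_Icc]; omega),
    if_pos (by simp only [Finset.mem_Icc]; omega), if_pos (by simp only [Finset.mem_Icc]; omega)]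
  have e1 : (p - (-(d-1))).natAbs = (p + (d-1)).natAbs := by omega
  have e2 : (p - (-d)).natAbs = (p + d).natAbs := by omega
  rw [e1, e2]

lemma SB_G4 (n d x s : ℤ) (hno : Odd n) (hd1 : 4 ≤ d)
    (hx1 : 1 ≤ x) (hx2 : 2 * x ≤ (n - 1) - 4 * d + 2) (hs01 : s = 0 ∨ s = 1) :
    (SB d (fun i => B2L (n-1) d x i + if i = s then 1 else 0) : ℤ)
      = SB d (B2L (n-1) d x)
        + 2 * ((2 + d) * n - 2 * d^2 - 3 * d - 1 + 2 * s^2 - 2 * x) := by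
  obtain ⟨k, hk⟩ := hno
  have hd2' : (2:ℤ) ≤ d := by omega
  set t := x.toNat with ht0
  set r := ((n - 1 - 4*d - 2*x + 2)/2).toNat with hr0
  have ht : (t : ℤ) = x := by omega
  have hr : 2 * (r : ℤ) = n + 1 - 4*d - 2*x := by omega
  have hbr : B2L (n-1) d x = genL d t t r r := B2L_eq_genL (n-1) d x hd2'
  have hsI : s ∈ Finset.Icc (-d) d := by simp only [Finset.mem_Icc]; omega
  have key := SB_addLeaf d s (B2L (n-1) d x) (by omega) hsI
  rw [hbr] at key ⊢
  rw [Tsum_genL d hd2' t t r r s, sum_genL d hd2'] at key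
  have hW1 := sum_abs_mid (-d) d s (by omega) (by omega)
  have hW2 := sum_abs_mid (-(d-2)) (d-2) s (by omega) (by omega)
  have e1 : ((s - (d-1)).natAbs : ℤ) = d - 1 - s := by omega
  have e2 : ((s + (d-1)).natAbs : ℤ) = d - 1 + s := by omega
  have e3 : ((s - d).natAbs : ℤ) = d - s := by omega
  have e4 : ((s + d).natAbs : ℤ) = d + s := by omega
  rw [e1, e2, e3, e4] at key
  rw [key]
  linear_combination hW1 + hW2 + (4*d+4) * ht + (2*d+4) * hr

lemma SB_chain (n d x : ℤ) (hno : Odd n) (hd1 : 4 ≤ d)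
    (hx1 : 2 ≤ x) (hx2 : 2 * x ≤ (n - 1) - 4 * d + 2) :
    (SB d (B2L (n-1) d (x-1)) : ℤ) = SB d (B2L (n-1) d x) + (8*x + 16*d - 20) := by
  obtain ⟨k, hk⟩ := hno
  have hd2' : (2:ℤ) ≤ d := by omega
  set a := (x-1).toNat with ha0
  set r := ((n - 1 - 4*d - 2*x + 2)/2).toNat with hr0
  have ha : (a : ℤ) = x - 1 := by omega
  have hbrx : B2L (n-1) d x = genL d (a+1) (a+1) r r := by
    rw [B2L_eq_genL (n-1) d x hd2']
    have h1 : x.toNat = a + 1 := by omega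
    rw [h1]
  have hbrx1 : B2L (n-1) d (x-1) = genL d a a (r+1) (r+1) := by
    rw [B2L_eq_genL (n-1) d (x-1) hd2']
    have h1 : (x-1).toNat = a := by omega
    have h2 : ((n - 1 - 4*d - 2*(x-1) + 2)/2).toNat = r + 1 := by omega
    rw [h1, h2]
  -- four leaf moves
  have h1 := SB_addLeaf d (d-1) (genL d a (a+1) r r) (by omega)
    (by simp only [Finset.mem_Icc]; omega)
  rw [addLeaf_a d hd2'] at h1
  rw [Tsum_genL d hd2' a (a+1) r r (d-1), sum_genL d hd2'] at h1
  have p11 : ((d - 1 - (d - 1)).natAbs : ℤ) = 0 := by omega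
  have p12 : ((d - 1 + (d - 1)).natAbs : ℤ) = 2*d - 2 := by omega
  have p13 : ((d - 1 - d).natAbs : ℤ) = 1 := by omega
  have p14 : ((d - 1 + d).natAbs : ℤ) = 2*d - 1 := by omega
  rw [p11, p12, p13, p14] at h1
  have h2 := SB_addLeaf d d (genL d a (a+1) r r) (by omega)
    (by simp only [Finset.mem_Icc]; omega)
  rw [addLeaf_b d hd2'] at h2
  rw [Tsum_genL d hd2' a (a+1) r r d, sum_genL d hd2'] at h2
  have p21 : ((d - (d - 1)).natAbs : ℤ) = 1 := by omega
  have p22 : ((d + (d - 1)).natAbs : ℤ) = 2*d - 1 := by omega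
  have p23 : ((d - d).natAbs : ℤ) = 0 := by omega
  have p24 : ((d + d).natAbs : ℤ) = 2*d := by omega
  rw [p21, p22, p23, p24] at h2
  have h3 := SB_addLeaf d (-(d-1)) (genL d a a (r+1) r) (by omega)
    (by simp only [Finset.mem_Icc]; omega)
  rw [addLeaf_a' d hd2'] at h3
  rw [Tsum_genL d hd2' a a (r+1) r (-(d-1)), sum_genL d hd2'] at h3
  have p31 : ((-(d-1) - (d - 1)).natAbs : ℤ) = 2*d - 2 := by omega
  have p32 : ((-(d-1) + (d - 1)).natAbs : ℤ) = 0 := by omega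
  have p33 : ((-(d-1) - d).natAbs : ℤ) = 2*d - 1 := by omega
  have p34 : ((-(d-1) + d).natAbs : ℤ) = 1 := by omega
  rw [p31, p32, p33, p34] at h3
  have h4 := SB_addLeaf d (-d) (genL d a a (r+1) r) (by omega)
    (by simp only [Finset.mem_Icc]; omega)
  rw [addLeaf_b' d hd2'] at h4
  rw [Tsum_genL d hd2' a a (r+1) r (-d), sum_genL d hd2'] at h4
  have p41 : ((-d - (d - 1)).natAbs : ℤ) = 2*d - 1 := by omega
  have p42 : ((-d + (d - 1)).natAbs : ℤ) = 1 := by omega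
  have p43 : ((-d - d).natAbs : ℤ) = 2*d := by omega
  have p44 : ((-d + d).natAbs : ℤ) = 0 := by omega
  rw [p41, p42, p43, p44] at h4
  -- interval sums
  have hW1a := sum_abs_mid (-d) d (d-1) (by omega) (by omega)
  have hW1b := sum_abs_mid (-d) d d (by omega) (by omega)
  have hW1c := sum_abs_mid (-d) d (-(d-1)) (by omega) (by omega)
  have hW1d := sum_abs_mid (-d) d (-d) (by omega) (by omega)
  have hW2a := sum_abs_right (-(d-2)) (d-2) (d-1) (by omega) (by omega)
  have hW2b := sum_abs_right (-(d-2)) (d-2) d (by omega) (by omega)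
  have hW2c := sum_abs_left (-(d-2)) (d-2) (-(d-1)) (by omega) (by omega)
  have hW2d := sum_abs_left (-(d-2)) (d-2) (-d) (by omega) (by omega)
  push_cast at h1 h2 h3 h4 hW1a hW1b hW1c hW1d hW2a hW2b hW2c hW2d
  rw [hbrx1, hbrx]
  linear_combination h2 - h1 + h4 - h3 + hW1b - hW1a + hW2b - hW2a
    + hW1d - hW1c + hW2d - hW2c + 8*ha

end WG4

/-- `W(G₄(n,d,x,s)) = W(B₂(n−1,d,x)) + (2+d)n − 2d² − 3d − 1 + 2s² − 2x`,
and consequently `W(G₄(n,d,x−1,s)) − W(G₄(n,d,x,s)) = 4(x + 2d − 2)` for `x ≥ 2`. -/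
theorem wiener_G4 (n d x s : ℤ) (hno : Odd n) (hn : 19 ≤ n)
    (hd1 : 4 ≤ d) (hd2 : 4 * d ≤ n - 1)
    (hx1 : 1 ≤ x) (hx2 : 2 * x ≤ (n - 1) - 4 * d + 2)
    (hs : s ∈ ({0, 1} : Set ℤ)) :
    (wiener (G4 n d x s) : ℚ)
      = (wiener (B2 (n - 1) d x) : ℚ) + (2 + (d:ℚ)) * (n : ℚ)
        - 2 * (d:ℚ)^2 - 3 * (d:ℚ) - 1 + 2 * (s:ℚ)^2 - 2 * (x:ℚ) ∧
    (2 ≤ x →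
      (wiener (G4 n d (x - 1) s) : ℤ) - (wiener (G4 n d x s) : ℤ)
        = 4 * (x + 2 * d - 2)) := by
  simp only [Set.mem_insert_iff, Set.mem_singleton_iff] at hs
  have hP1 : ∀ y : ℤ, 1 ≤ y → 2 * y ≤ (n - 1) - 4 * d + 2 →
      (wiener (G4 n d y s) : ℚ)
        = (wiener (B2 (n - 1) d y) : ℚ) + (2 + (d:ℚ)) * (n : ℚ)
          - 2 * (d:ℚ)^2 - 3 * (d:ℚ) - 1 + 2 * (s:ℚ)^2 - 2 * (y:ℚ) := by
    intro y hy1 hy2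
    have h4 := WG4.two_wiener d (fun i => B2L (n-1) d y i + if i = s then 1 else 0)
    have h5 := WG4.two_wiener d (B2L (n-1) d y)
    have h6 := WG4.SB_G4 n d y s hno hd1 hy1 hy2 hs
    have hG : wiener (G4 n d y s)
        = wiener (caterpillar d (fun i => B2L (n-1) d y i + if i = s then 1 else 0)) := rfl
    have hB : wiener (B2 (n-1) d y) = wiener (caterpillar d (B2L (n-1) d y)) := rfl
    rw [hG, hB]
    have q4 : 2 * (wiener (caterpillar d (fun i => B2L (n-1) d y i + if i = s then 1 else 0)) : ℚ)
        = ((WG4.SB d (fun i => B2L (n-1) d y i + if i = s then 1 else 0) : ℕ) : ℚ) := by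
      exact_mod_cast congrArg (fun z : ℕ => (z : ℚ)) h4
    have q5 : 2 * (wiener (caterpillar d (B2L (n-1) d y)) : ℚ)
        = ((WG4.SB d (B2L (n-1) d y) : ℕ) : ℚ) := by
      exact_mod_cast congrArg (fun z : ℕ => (z : ℚ)) h5
    have q6 : ((WG4.SB d (fun i => B2L (n-1) d y i + if i = s then 1 else 0) : ℕ) : ℚ)
        = ((WG4.SB d (B2L (n-1) d y) : ℕ) : ℚ)
          + 2 * ((2 + (d:ℚ)) * n - 2 * (d:ℚ)^2 - 3 * d - 1 + 2 * (s:ℚ)^2 - 2 * (y:ℚ)) := by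
      have := congrArg (fun z : ℤ => (z : ℚ)) h6
      push_cast at this ⊢
      linarith [this]
    linear_combination (1/2) * q4 - (1/2) * q5 + (1/2) * q6
  refine ⟨hP1 x hx1 hx2, fun h2x => ?_⟩
  have e1 := hP1 x hx1 hx2
  have e2 := hP1 (x-1) (by omega) (by omega)
  have h5 := WG4.two_wiener d (B2L (n-1) d x)
  have h5' := WG4.two_wiener d (B2L (n-1) d (x-1))
  have hB : wiener (B2 (n-1) d x) = wiener (caterpillar d (B2L (n-1) d x)) := rfl
  have hB' : wiener (B2 (n-1) d (x-1)) = wiener (caterpillar d (B2L (n-1) d (x-1))) := rfl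
  have hchain := WG4.SB_chain n d x hno hd1 h2x hx2
  have q5 : 2 * (wiener (B2 (n-1) d x) : ℚ) = ((WG4.SB d (B2L (n-1) d x) : ℕ) : ℚ) := by
    rw [hB]; exact_mod_cast congrArg (fun z : ℕ => (z : ℚ)) h5
  have q5' : 2 * (wiener (B2 (n-1) d (x-1)) : ℚ) = ((WG4.SB d (B2L (n-1) d (x-1)) : ℕ) : ℚ) := by
    rw [hB']; exact_mod_cast congrArg (fun z : ℕ => (z : ℚ)) h5'
  have qc : ((WG4.SB d (B2L (n-1) d (x-1)) : ℕ) : ℚ)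
      = ((WG4.SB d (B2L (n-1) d x) : ℕ) : ℚ) + (8*(x:ℚ) + 16*(d:ℚ) - 20) := by
    have := congrArg (fun z : ℤ => (z : ℚ)) hchain
    push_cast at this ⊢
    linarith [this]
  have hfin : (wiener (G4 n d (x-1) s) : ℚ) - (wiener (G4 n d x s) : ℚ)
      = 4 * ((x:ℚ) + 2*(d:ℚ) - 2) := by
    push_cast at e2
    linear_combination e2 - e1 + (1/2) * qc + (1/2) * q5' - (1/2) * q5
  exact_mod_cast hfin
end
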